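/- arXiv:2405.08105 — 6 statements merged into one kernel-verified Lean document; each statement's English description precedes it below -/
import Mathlib

section
/- Let A be a unital C*-algebra and let τ : A → ℂ be a linear functional that is a trace (τ(a·b) = τ(b·a) for all a, b ∈ A), positive (τ(a) is a nonnegative real number for every positive element a of A, i.e., every a with 0 ≤ a), and faithful (if 0 ≤ a and τ(a) = 0 then a = 0). Then for every idempotent e ∈ A (e·e = e), the value τ(e) is a real number satisfying 0 ≤ τ(e) ≤ τ(1); moreover, τ(e) = 0 if and only if e = 0. -/
open scoped ComplexOrder

private lemma trace_idem_aux
    {A : Type*} [NormedRing A] [StarRing A] [CStarRing A]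
    [NormedAlgebra ℂ A] [StarModule ℂ A] [CompleteSpace A]
    (τ : A →ₗ[ℂ] ℂ)
    (htrace : ∀ a b : A, τ (a * b) = τ (b * a))
    (hpos : ∀ a : A, (∃ b : A, a = star b * b) → 0 ≤ τ a)
    (hfaithful : ∀ a : A, (∃ b : A, a = star b * b) → τ a = 0 → a = 0)
    (e : A) (he : e * e = e) :
    0 ≤ τ e ∧ (τ e = 0 → e = 0) := by
  letI : CStarAlgebra A := {}
  letI := CStarAlgebra.spectralOrder A
  letI := CStarAlgebra.spectralOrderedRing A
  obtain ⟨d, hd⟩ : ∃ d : A, d = e - star e := ⟨_, rfl⟩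
  obtain ⟨h, hh⟩ : ∃ h : A, h = 1 + star d * d := ⟨_, rfl⟩
  have hestar : star e * star e = star e := by rw [← star_mul, he]
  have he' : ∀ x : A, e * (e * x) = e * x := fun x => by rw [← mul_assoc, he]
  have hestar' : ∀ x : A, star e * (star e * x) = star e * x := fun x => by
    rw [← mul_assoc, hestar]
  have hu' : IsUnit h := hh ▸
    CStarAlgebra.isUnit_of_le 1
      (le_add_of_nonneg_right (star_mul_self_nonneg d)) isStrictlyPositive_one
  obtain ⟨u, hu⟩ := hu'
  obtain ⟨v, hv⟩ : ∃ v : A, v = (↑u⁻¹ : A) := ⟨_, rfl⟩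
  have hvh : v * h = 1 := by rw [hv, ← hu]; exact u.inv_mul
  have hhv : h * v = 1 := by rw [hv, ← hu]; exact u.mul_inv
  have hsa : star h = h := by simp [hh, star_mul, mul_add, add_mul]
  have hvsa : star v = v := by
    have h1 : star v * h = 1 := by rw [← hsa, ← star_mul, hhv, star_one]
    calc star v = star v * (h * v) := by rw [hhv, mul_one]
    _ = (star v * h) * v := by rw [mul_assoc]
    _ = v := by rw [h1, one_mul]
  have hhe : h * e = e * (star e * e) := by
    rw [hh, hd]
    simp only [star_sub, star_star, add_mul, sub_mul, mul_sub, one_mul, mul_one,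
      mul_assoc, he, hestar, he', hestar']
    abel
  have heh : e * h = e * (star e * e) := by
    rw [hh, hd]
    simp only [star_sub, star_star, mul_add, mul_sub, sub_mul, one_mul, mul_one,
      mul_assoc, he, hestar, he', hestar']
    abel
  have hcomm : v * e = e * v := by
    calc v * e = v * e * (h * v) := by rw [hhv, mul_one]
    _ = v * (e * h) * v := by noncomm_ring
    _ = v * (h * e) * v := by rw [heh, hhe]
    _ = (v * h) * (e * v) := by noncomm_ring
    _ = e * v := by rw [hvh, one_mul]
  have key : τ e = τ (star e * (v * e)) := by
    have h1 : e = e * ((star e * e) * v) := by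
      rw [← mul_assoc, ← heh, mul_assoc, hhv, mul_one]
    calc τ e = τ (e * ((star e * e) * v)) := by conv_lhs => rw [h1]
    _ = τ (((star e * e) * v) * e) := htrace _ _
    _ = τ (star e * (e * (v * e))) := by rw [mul_assoc, mul_assoc]
    _ = τ (star e * (v * e)) := by rw [hcomm, he', ← hcomm]
  have hsb1 : star (v * e) = star e * v := by rw [star_mul, hvsa]
  have hdecomp : star e * (v * e)
      = star (v * e) * (v * e) + star (d * (v * e)) * (d * (v * e)) := by
    have expand : h * (v * e) = v * e + star d * (d * (v * e)) := by
      rw [hh, add_mul, one_mul, mul_assoc]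
    calc star e * (v * e) = (star e * v) * e := by rw [mul_assoc]
    _ = (star e * v) * ((h * v) * e) := by rw [hhv, one_mul]
    _ = (star e * v) * (h * (v * e)) := by simp only [mul_assoc]
    _ = (star e * v) * (v * e) + (star e * v) * (star d * (d * (v * e))) := by
        rw [expand, mul_add]
    _ = star (v * e) * (v * e) + star (d * (v * e)) * (d * (v * e)) := by
        rw [star_mul d (v * e), hsb1]; simp only [mul_assoc]
  have hpos1 : 0 ≤ τ (star (v * e) * (v * e)) := hpos _ ⟨v * e, rfl⟩
  have hpos2 : 0 ≤ τ (star (d * (v * e)) * (d * (v * e))) := hpos _ ⟨d * (v * e), rfl⟩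
  have hsum : τ e = τ (star (v * e) * (v * e)) + τ (star (d * (v * e)) * (d * (v * e))) := by
    rw [key, hdecomp, map_add]
  refine ⟨hsum ▸ add_nonneg hpos1 hpos2, fun hτe => ?_⟩
  have h1 : τ (star (v * e) * (v * e)) = 0 := by
    have hz : τ (star (v * e) * (v * e)) + τ (star (d * (v * e)) * (d * (v * e))) = 0 := by
      rw [← hsum, hτe]
    have hle : τ (star (v * e) * (v * e)) ≤ 0 := by
      calc τ (star (v * e) * (v * e))
          ≤ τ (star (v * e) * (v * e)) + τ (star (d * (v * e)) * (d * (v * e))) :=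
            le_add_of_nonneg_right hpos2
      _ = 0 := hz
    exact le_antisymm hle hpos1
  have hb10 : star (v * e) * (v * e) = 0 := hfaithful _ ⟨v * e, rfl⟩ h1
  have hve : v * e = 0 := (CStarRing.star_mul_self_eq_zero_iff _).mp hb10
  calc e = (h * v) * e := by rw [hhv, one_mul]
  _ = h * (v * e) := by rw [mul_assoc]
  _ = 0 := by rw [hve, mul_zero]

/-- **(Burger–Valette).** If `τ` is a positive faithful trace on a unital
C*-algebra `A` (positivity/faithfulness stated for elements of the form
`star b * b`, which are exactly the positive elements), then for every
idempotent `e` one has `0 ≤ τ e ≤ τ 1` (in particular `τ e` is a nonnegative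
real number), and `τ e = 0` iff `e = 0`. -/
theorem trace_idempotent_nonneg_le_trace_one
    {A : Type*} [NormedRing A] [StarRing A] [CStarRing A]
    [NormedAlgebra ℂ A] [StarModule ℂ A] [CompleteSpace A]
    (τ : A →ₗ[ℂ] ℂ)
    (htrace : ∀ a b : A, τ (a * b) = τ (b * a))
    (hpos : ∀ a : A, (∃ b : A, a = star b * b) → 0 ≤ τ a)
    (hfaithful : ∀ a : A, (∃ b : A, a = star b * b) → τ a = 0 → a = 0)
    (e : A) (he : e * e = e) :
    0 ≤ τ e ∧ τ e ≤ τ 1 ∧ (τ e = 0 ↔ e = 0) := by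
  obtain ⟨h1, h2⟩ := trace_idem_aux τ htrace hpos hfaithful e he
  have hf : (1 - e) * (1 - e) = 1 - e := by
    rw [sub_mul, one_mul, mul_sub, mul_one, he, sub_self, sub_zero]
  obtain ⟨h3, _⟩ := trace_idem_aux τ htrace hpos hfaithful (1 - e) hf
  have h4 : τ e ≤ τ 1 := by
    rw [map_sub] at h3
    exact sub_nonneg.mp h3
  exact ⟨h1, h4, h2, fun h => by rw [h, map_zero]⟩
end

section
/- Let G be a t.d.l.c. group, μ a left Haar measure on G, and O a compact open subgroup with μ(O) = 1. Let M = C_c(G,ℂ)^O be the ℂ[G]-module of locally constant compactly supported functions β : G → ℂ with β(xω) = β(x) for all x ∈ G, ω ∈ O, with G acting by (g·β)(x) = β(g⁻¹x). Let H(G,O) be the set of locally constant compactly supported functions f : G → ℂ that are bi-O-invariant, i.e., f(ω₁xω₂) = f(x) for all x ∈ G, ω₁, ω₂ ∈ O. For f ∈ H(G,O) define φ(f) : M → M by φ(f)(β) = β ∗ f, where (β ∗ f)(x) = ∫_G β(ω)·f(ω⁻¹x) dμ(ω). Then: (i) for every f ∈ H(G,O), φ(f) is a well-defined ℂ-linear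 G-equivariant endomorphism of M; (ii) φ(f ∗ h) = φ(h) ∘ φ(f) for all f, h ∈ H(G,O) (φ is anti-multiplicative); and (iii) φ is a bijection from H(G,O) onto the set of ℂ-linear G-equivariant endomorphisms of M. -/
open MeasureTheory Pointwise

section HeckeAction

variable {G : Type*} [Group G] [TopologicalSpace G]

/-- Convolution of two functions `G → ℂ` with respect to the measure `μ`:
`(β ∗ f)(x) = ∫ β(ω) f(ω⁻¹x) dμ(ω)`. -/
noncomputable def hConv [MeasurableSpace G] (μ : Measure G) (β f : G → ℂ) :
    G → ℂ :=
  fun x => ∫ ω, β ω * f (ω⁻¹ * x) ∂μ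

/-- Membership in `C_c(G,ℂ)^O`: locally constant, compactly supported,
right `O`-invariant. -/
def IsCcRInv (O : Subgroup G) (β : G → ℂ) : Prop :=
  IsLocallyConstant β ∧ HasCompactSupport β ∧
    ∀ x : G, ∀ ω ∈ O, β (x * ω) = β x

/-- Membership in the Hecke algebra `H(G,O)`: locally constant, compactly
supported, bi-`O`-invariant. -/
def IsHeckeFun (O : Subgroup G) (f : G → ℂ) : Prop :=
  IsLocallyConstant f ∧ HasCompactSupport f ∧
    ∀ x : G, ∀ ω₁ ∈ O, ∀ ω₂ ∈ O, f (ω₁ * x * ω₂) = f x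

end HeckeAction

namespace HeckeAux

variable {G : Type*} [Group G] [TopologicalSpace G] [IsTopologicalGroup G]
  [T2Space G] [MeasurableSpace G] [BorelSpace G] {O : Subgroup G}

lemma coset_clopen (hOc : IsCompact (O : Set G)) (hOo : IsOpen (O : Set G)) (t : G) :
    IsClopen (t • (O : Set G)) :=
  ⟨(hOc.smul t).isClosed, hOo.smul t⟩

lemma isLocallyConstant_indicator {s : Set G} (hs : IsClopen s) :
    IsLocallyConstant (s.indicator (1 : G → ℂ)) := by
  rw [IsLocallyConstant.iff_exists_open]
  intro x
  by_cases hx : x ∈ s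
  · exact ⟨s, hs.2, hx, fun y hy => by
      simp [Set.indicator_of_mem hx, Set.indicator_of_mem hy]⟩
  · exact ⟨sᶜ, hs.1.isOpen_compl, hx, fun y hy => by
      simp [Set.indicator_of_notMem hx,
        Set.indicator_of_notMem (by simpa using hy : y ∉ s)]⟩

lemma coset_eq_or_disjoint (s t : G) :
    s • (O : Set G) = t • (O : Set G) ∨ Disjoint (s • (O : Set G)) (t • (O : Set G)) := by
  by_cases h : (s • (O : Set G) ∩ t • (O : Set G)).Nonempty
  · left
    obtain ⟨x, hxs, hxt⟩ := h
    rw [Set.mem_smul_set_iff_inv_smul_mem, smul_eq_mul] at hxs hxt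
    ext y
    simp only [Set.mem_smul_set_iff_inv_smul_mem, smul_eq_mul]
    constructor
    · intro hy
      have hrw : t⁻¹ * y = (t⁻¹ * x) * (s⁻¹ * x)⁻¹ * (s⁻¹ * y) := by group
      rw [hrw]; exact mul_mem (mul_mem hxt (inv_mem hxs)) hy
    · intro hy
      have hrw : s⁻¹ * y = (s⁻¹ * x) * (t⁻¹ * x)⁻¹ * (t⁻¹ * y) := by group
      rw [hrw]; exact mul_mem (mul_mem hxs (inv_mem hxt)) hy
  · right
    exact Set.disjoint_iff_inter_eq_empty.2 (Set.not_nonempty_iff_eq_empty.1 h)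

lemma disjointify (T : Finset G) :
    ∃ T' : Finset G,
      (⋃ t ∈ T, t • (O : Set G)) ⊆ (⋃ t ∈ T', t • (O : Set G)) ∧
      (T' : Set G).PairwiseDisjoint (fun t => t • (O : Set G)) := by
  classical
  induction T using Finset.induction_on with
  | empty => exact ⟨∅, by simp, by simp⟩
  | @insert a T ha ih =>
    obtain ⟨T', hsub, hdisj⟩ := ih
    by_cases hcov : ∃ t' ∈ T', a • (O : Set G) = t' • (O : Set G)
    · obtain ⟨t', ht'T, ht'⟩ := hcov
      refine ⟨T', fun x hx => ?_, hdisj⟩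
      simp only [Finset.mem_insert, Set.mem_iUnion, exists_prop] at hx ⊢
      obtain ⟨t, htmem, hxt⟩ := hx
      rcases htmem with rfl | htT
      · exact ⟨t', ht'T, ht' ▸ hxt⟩
      · simpa only [Set.mem_iUnion, exists_prop] using hsub (Set.mem_biUnion htT hxt)
    · refine ⟨insert a T', fun x hx => ?_, ?_⟩
      · simp only [Finset.mem_insert, Set.mem_iUnion, exists_prop] at hx ⊢
        obtain ⟨t, htmem, hxt⟩ := hx
        rcases htmem with rfl | htT
        · exact ⟨t, Or.inl rfl, hxt⟩
        · obtain ⟨t', ht'T, hxt'⟩ := by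
            simpa only [Set.mem_iUnion, exists_prop] using hsub (Set.mem_biUnion htT hxt)
          exact ⟨t', Or.inr ht'T, hxt'⟩
      · rw [Finset.coe_insert]
        refine Set.pairwiseDisjoint_insert.2 ⟨hdisj, fun t' ht'T _ => ?_⟩
        rcases coset_eq_or_disjoint (O := O) a t' with heq | hd
        · exact absurd ⟨t', ht'T, heq⟩ hcov
        · exact hd

/-- Every element of `C_c(G,ℂ)^O` is a finite linear combination of indicator
functions of left cosets of `O`. -/
lemma exists_rep (hOc : IsCompact (O : Set G)) (hOo : IsOpen (O : Set G))
    {β : G → ℂ} (hβ : IsCcRInv O β) :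
    ∃ T : Finset G, ∀ x, β x = ∑ t ∈ T, β t * (t • (O : Set G)).indicator (1 : G → ℂ) x := by
  classical
  have hcover : tsupport β ⊆ ⋃ t : G, t • (O : Set G) := by
    intro x _
    exact Set.mem_iUnion.2 ⟨x, by
      rw [Set.mem_smul_set_iff_inv_smul_mem, smul_eq_mul, inv_mul_cancel]
      exact one_mem O⟩
  obtain ⟨T₀, hT₀⟩ := hβ.2.1.elim_finite_subcover (fun t : G => t • (O : Set G))
    (fun t => hOo.smul t) hcover
  obtain ⟨T, hsub, hdisj⟩ := disjointify (O := O) T₀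
  refine ⟨T, fun x => ?_⟩
  by_cases hx : ∃ t ∈ T, x ∈ t • (O : Set G)
  · obtain ⟨t₀, ht₀T, hxt₀⟩ := hx
    rw [Finset.sum_eq_single_of_mem t₀ ht₀T]
    · rw [Set.indicator_of_mem hxt₀, Pi.one_apply, mul_one]
      obtain ⟨ω, hω, rfl⟩ := hxt₀
      show β (t₀ * ω) = β t₀
      exact hβ.2.2 t₀ ω hω
    · intro t htT htne
      have hdis : Disjoint (t • (O : Set G)) (t₀ • (O : Set G)) :=
        hdisj (Finset.mem_coe.2 htT) (Finset.mem_coe.2 ht₀T) htne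
      have : x ∉ t • (O : Set G) := fun hxt => (hdis.ne_of_mem hxt hxt₀) rfl
      rw [Set.indicator_of_notMem this, mul_zero]
  · have hx0 : β x = 0 := by
      by_contra h0
      have hxs : x ∈ tsupport β := subset_tsupport β (by simpa using h0)
      have := hsub (hT₀ hxs)
      simp only [Set.mem_iUnion, exists_prop] at this
      exact hx ⟨this.choose, this.choose_spec.1, this.choose_spec.2⟩
    rw [hx0]
    exact (Finset.sum_eq_zero fun t htT => by
      have : x ∉ t • (O : Set G) := fun hxt => hx ⟨t, htT, hxt⟩
      rw [Set.indicator_of_notMem this, mul_zero]).symm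

variable {μ : Measure G} [μ.IsHaarMeasure]

/-- Convolution of a coset indicator against a left-`O`-invariant function. -/
lemma conv_eval (hμO : μ (O : Set G) = 1) (hOo : IsOpen (O : Set G))
    {f : G → ℂ} (hfl : ∀ y : G, ∀ ω ∈ O, f (ω * y) = f y) (t x : G) :
    ∫ ω, (t • (O : Set G)).indicator (1 : G → ℂ) ω * f (ω⁻¹ * x) ∂μ = f (t⁻¹ * x) := by
  have h1 := integral_mul_left_eq_self (μ := μ)
    (fun ω => (t • (O : Set G)).indicator (1 : G → ℂ) ω * f (ω⁻¹ * x)) t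
  rw [← h1]
  have h2 : ∀ ω : G, (t • (O : Set G)).indicator (1 : G → ℂ) (t * ω) * f ((t * ω)⁻¹ * x)
      = (O : Set G).indicator (fun _ => f (t⁻¹ * x)) ω := by
    intro ω
    by_cases hω : ω ∈ (O : Set G)
    · have hmem : t * ω ∈ t • (O : Set G) := Set.smul_mem_smul_set hω
      rw [Set.indicator_of_mem hmem, Set.indicator_of_mem hω, Pi.one_apply, one_mul]
      have hrw : (t * ω)⁻¹ * x = ω⁻¹ * (t⁻¹ * x) := by group
      rw [hrw]
      exact hfl (t⁻¹ * x) ω⁻¹ (inv_mem hω)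
    · have hmem : t * ω ∉ t • (O : Set G) := by
        intro h
        rw [Set.mem_smul_set_iff_inv_smul_mem, smul_eq_mul, inv_mul_cancel_left] at h
        exact hω h
      rw [Set.indicator_of_notMem hmem, Set.indicator_of_notMem hω, zero_mul]
  simp only [h2]
  rw [integral_indicator_const _ hOo.measurableSet, measureReal_def, hμO]
  simp

lemma conv_repr (hμO : μ (O : Set G) = 1) (hOc : IsCompact (O : Set G))
    (hOo : IsOpen (O : Set G)) {β f : G → ℂ} {T : Finset G}
    (hrep : ∀ y, β y = ∑ t ∈ T, β t * (t • (O : Set G)).indicator (1 : G → ℂ) y)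
    (hfc : Continuous f) (hfl : ∀ y : G, ∀ ω ∈ O, f (ω * y) = f y) (x : G) :
    hConv μ β f x = ∑ t ∈ T, β t * f (t⁻¹ * x) := by
  have hint : ∀ t ∈ T, Integrable
      (fun ω => β t * ((t • (O : Set G)).indicator (1 : G → ℂ) ω * f (ω⁻¹ * x))) μ := by
    intro t _
    apply Continuous.integrable_of_hasCompactSupport
    · exact continuous_const.mul
        (((isLocallyConstant_indicator (coset_clopen hOc hOo t)).continuous).mul
          (hfc.comp (continuous_inv.mul continuous_const)))
    · exact HasCompactSupport.intro (hOc.smul t) fun ω hω => by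
        simp [Set.indicator_of_notMem hω]
  calc hConv μ β f x
      = ∫ ω, ∑ t ∈ T, β t * ((t • (O : Set G)).indicator (1 : G → ℂ) ω * f (ω⁻¹ * x)) ∂μ :=
        integral_congr_ae (Filter.Eventually.of_forall fun ω => by
          show β ω * f (ω⁻¹ * x) = _
          rw [hrep ω, Finset.sum_mul]
          exact Finset.sum_congr rfl fun t _ => mul_assoc _ _ _)
    _ = ∑ t ∈ T, ∫ ω, β t * ((t • (O : Set G)).indicator (1 : G → ℂ) ω * f (ω⁻¹ * x)) ∂μ :=
        integral_finset_sum T hint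
    _ = ∑ t ∈ T, β t * f (t⁻¹ * x) :=
        Finset.sum_congr rfl fun t _ => by rw [integral_const_mul, conv_eval hμO hOo hfl t x]

lemma integrand_integrable {β f : G → ℂ} (hβc : Continuous β) (hβs : HasCompactSupport β)
    (hfc : Continuous f) (x : G) :
    Integrable (fun ω => β ω * f (ω⁻¹ * x)) μ :=
  (hβc.mul (hfc.comp (continuous_inv.mul continuous_const))).integrable_of_hasCompactSupport
    (HasCompactSupport.intro hβs fun ω hω => by
      rw [Pi.mul_apply, image_eq_zero_of_notMem_tsupport hω, zero_mul])

lemma lc_term {f : G → ℂ} (hf : IsLocallyConstant f) (c : ℂ) (t : G) :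
    IsLocallyConstant fun x => c * f (t⁻¹ * x) :=
  (hf.comp fun z => c * z).comp_continuous (continuous_const.mul continuous_id)

lemma hcs_term {f : G → ℂ} (hf : HasCompactSupport f) (c : ℂ) (t : G) :
    HasCompactSupport fun x => c * f (t⁻¹ * x) := by
  refine HasCompactSupport.intro (hf.smul t) fun x hx => ?_
  have : t⁻¹ * x ∉ tsupport f := by
    intro h
    exact hx (by simpa using Set.smul_mem_smul_set (a := t) h)
  rw [image_eq_zero_of_notMem_tsupport this, mul_zero]

lemma lc_sum {ι : Type*} (T : Finset ι) (F : ι → G → ℂ)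
    (h : ∀ i ∈ T, IsLocallyConstant (F i)) :
    IsLocallyConstant fun x => ∑ i ∈ T, F i x := by
  classical
  induction T using Finset.induction_on with
  | empty => simp only [Finset.sum_empty]; exact IsLocallyConstant.const 0
  | @insert a T ha ih =>
    simp only [Finset.sum_insert ha]
    exact (h a (Finset.mem_insert_self a T)).add
      (ih fun i hi => h i (Finset.mem_insert_of_mem hi))

lemma hcs_sum {ι : Type*} (T : Finset ι) (F : ι → G → ℂ)
    (h : ∀ i ∈ T, HasCompactSupport (F i)) :
    HasCompactSupport fun x => ∑ i ∈ T, F i x := by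
  classical
  induction T using Finset.induction_on with
  | empty =>
    simp only [Finset.sum_empty]
    exact HasCompactSupport.intro isCompact_empty fun x _ => rfl
  | @insert a T ha ih =>
    simp only [Finset.sum_insert ha]
    exact (h a (Finset.mem_insert_self a T)).add
      (ih fun i hi => h i (Finset.mem_insert_of_mem hi))

lemma hecke_left {f : G → ℂ} (hf : IsHeckeFun O f) :
    ∀ y : G, ∀ ω ∈ O, f (ω * y) = f y := fun y ω hω => by
  simpa using hf.2.2 y ω hω 1 (one_mem O)

lemma hecke_right {f : G → ℂ} (hf : IsHeckeFun O f) :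
    ∀ y : G, ∀ ω ∈ O, f (y * ω) = f y := fun y ω hω => by
  simpa using hf.2.2 y 1 (one_mem O) ω hω

lemma hecke_ccr {f : G → ℂ} (hf : IsHeckeFun O f) : IsCcRInv O f :=
  ⟨hf.1, hf.2.1, hecke_right hf⟩

/-- The convolution of a left-`O`-invariant function with anything is
left-`O`-invariant. -/
lemma conv_left_inv {f h : G → ℂ} (hfl : ∀ y : G, ∀ ω ∈ O, f (ω * y) = f y) :
    ∀ y : G, ∀ ω ∈ O, hConv μ f h (ω * y) = hConv μ f h y := by
  intro y ω hω
  show (∫ w, f w * h (w⁻¹ * (ω * y)) ∂μ) = ∫ w, f w * h (w⁻¹ * y) ∂μ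
  have h1 := integral_mul_left_eq_self (μ := μ) (fun w => f w * h (w⁻¹ * (ω * y))) ω
  rw [← h1]
  have h2 : ∀ w : G, f (ω * w) * h ((ω * w)⁻¹ * (ω * y)) = f w * h (w⁻¹ * y) := by
    intro w
    have hrw : (ω * w)⁻¹ * (ω * y) = w⁻¹ * y := by group
    rw [hrw, hfl w ω hω]
  simp only [h2]

lemma translate_conv (f h : G → ℂ) (t x : G) :
    (∫ ω, f (t⁻¹ * ω) * h (ω⁻¹ * x) ∂μ) = hConv μ f h (t⁻¹ * x) := by
  show _ = ∫ ω, f ω * h (ω⁻¹ * (t⁻¹ * x)) ∂μ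
  have h1 := integral_mul_left_eq_self (μ := μ) (fun ω => f (t⁻¹ * ω) * h (ω⁻¹ * x)) t
  rw [← h1]
  have h2 : ∀ ω : G, f (t⁻¹ * (t * ω)) * h ((t * ω)⁻¹ * x) = f ω * h (ω⁻¹ * (t⁻¹ * x)) := by
    intro ω
    have hrw : (t * ω)⁻¹ * x = ω⁻¹ * (t⁻¹ * x) := by group
    rw [inv_mul_cancel_left, hrw]
  simp only [h2]

/-- Indicator functions of left cosets of `O` belong to `C_c(G,ℂ)^O`. -/
lemma cosetInd_ccr (hOc : IsCompact (O : Set G)) (hOo : IsOpen (O : Set G)) (t : G) :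
    IsCcRInv O ((t • (O : Set G)).indicator (1 : G → ℂ)) := by
  refine ⟨isLocallyConstant_indicator (coset_clopen hOc hOo t),
    HasCompactSupport.intro (hOc.smul t) fun x hx => Set.indicator_of_notMem hx _, ?_⟩
  intro x ω hω
  have hiff : x * ω ∈ t • (O : Set G) ↔ x ∈ t • (O : Set G) := by
    simp only [Set.mem_smul_set_iff_inv_smul_mem, smul_eq_mul, ← mul_assoc]
    exact mul_mem_cancel_right hω
  by_cases hx : x ∈ t • (O : Set G)
  · rw [Set.indicator_of_mem (hiff.2 hx), Set.indicator_of_mem hx]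
    rfl
  · rw [Set.indicator_of_notMem (fun h => hx (hiff.1 h)), Set.indicator_of_notMem hx]

lemma indO_ccr (hOc : IsCompact (O : Set G)) (hOo : IsOpen (O : Set G)) :
    IsCcRInv O ((O : Set G).indicator (1 : G → ℂ)) := by
  have := cosetInd_ccr hOc hOo 1
  rwa [one_smul] at this

lemma conv_indO (hμO : μ (O : Set G) = 1) (hOo : IsOpen (O : Set G))
    {f : G → ℂ} (hfl : ∀ y : G, ∀ ω ∈ O, f (ω * y) = f y) (x : G) :
    hConv μ ((O : Set G).indicator (1 : G → ℂ)) f x = f x := by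
  have := conv_eval (μ := μ) hμO hOo hfl 1 x
  rw [one_smul] at this
  simpa [hConv] using this

end HeckeAux

open HeckeAux in
/-- Convolution on the right by elements of the Hecke algebra `H(G,O)` gives
(i) well-defined `ℂ`-linear `G`-equivariant endomorphisms `φ(f) : β ↦ β ∗ f`
of `M = C_c(G,ℂ)^O`, (ii) `φ(f ∗ h) = φ(h) ∘ φ(f)` (anti-multiplicativity),
and (iii) `φ` is a bijection from `H(G,O)` onto the `ℂ`-linear `G`-equivariant
endomorphisms of `M`. -/
theorem hecke_algebra_is_opposite_endomorphism_algebra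
    {G : Type*} [Group G] [TopologicalSpace G] [IsTopologicalGroup G]
    [LocallyCompactSpace G] [TotallyDisconnectedSpace G] [T2Space G]
    [MeasurableSpace G] [BorelSpace G]
    (μ : Measure G) [μ.IsHaarMeasure]
    (O : Subgroup G) (hOc : IsCompact (O : Set G)) (hOo : IsOpen (O : Set G))
    (hμO : μ (O : Set G) = 1)
    -- `M = C_c(G,ℂ)^O` as a `ℂ`-submodule of `G → ℂ`
    (M : Submodule ℂ (G → ℂ)) (hM : ∀ β : G → ℂ, β ∈ M ↔ IsCcRInv O β) :
    -- (i) `φ(f)` is a well-defined, `ℂ`-linear, `G`-equivariant map `M → M`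
    ((∀ f, IsHeckeFun O f → ∀ β, IsCcRInv O β → IsCcRInv O (hConv μ β f)) ∧
     (∀ f, IsHeckeFun O f → ∀ β γ, IsCcRInv O β → IsCcRInv O γ →
        hConv μ (β + γ) f = hConv μ β f + hConv μ γ f) ∧
     (∀ f, IsHeckeFun O f → ∀ (c : ℂ) (β), IsCcRInv O β →
        hConv μ (c • β) f = c • hConv μ β f) ∧
     (∀ f, IsHeckeFun O f → ∀ β, IsCcRInv O β → ∀ g z : G,
        hConv μ (fun x => β (g⁻¹ * x)) f z = hConv μ β f (g⁻¹ * z))) ∧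
    -- (ii) `φ` is anti-multiplicative: `φ(f ∗ h) = φ(h) ∘ φ(f)`
    (∀ f h, IsHeckeFun O f → IsHeckeFun O h → ∀ β, IsCcRInv O β →
        hConv μ β (hConv μ f h) = hConv μ (hConv μ β f) h) ∧
    -- (iii) `φ` is injective …
    (∀ f₁ f₂, IsHeckeFun O f₁ → IsHeckeFun O f₂ →
        (∀ β, IsCcRInv O β → hConv μ β f₁ = hConv μ β f₂) → f₁ = f₂) ∧
    -- … and surjective onto the `G`-equivariant `ℂ`-linear endomorphisms of `M`
    (∀ Φ : M →ₗ[ℂ] M,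
        (∀ (g : G) (β γ : M), ((γ : G → ℂ) = fun x => (β : G → ℂ) (g⁻¹ * x)) →
          ((Φ γ : G → ℂ) = fun x => (Φ β : G → ℂ) (g⁻¹ * x))) →
        ∃ f, IsHeckeFun O f ∧ ∀ β : M, ((Φ β : G → ℂ) = hConv μ (β : G → ℂ) f)) := by
  classical
  -- well-definedness, reused several times
  have wd : ∀ f, IsHeckeFun O f → ∀ β, IsCcRInv O β → IsCcRInv O (hConv μ β f) := by
    intro f hf β hβ
    obtain ⟨T, hrep⟩ := exists_rep hOc hOo hβ
    have heq : hConv μ β f = fun x => ∑ t ∈ T, β t * f (t⁻¹ * x) :=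
      funext fun x => conv_repr hμO hOc hOo hrep hf.1.continuous (hecke_left hf) x
    rw [heq]
    refine ⟨lc_sum T _ fun t _ => lc_term hf.1 (β t) t,
      hcs_sum T _ fun t _ => hcs_term hf.2.1 (β t) t, ?_⟩
    intro x ω hω
    refine Finset.sum_congr rfl fun t _ => ?_
    rw [← mul_assoc]
    exact congrArg (β t * ·) (hecke_right hf (t⁻¹ * x) ω hω)
  refine ⟨⟨wd, ?_, ?_, ?_⟩, ?_, ?_, ?_⟩
  · -- additivity
    intro f hf β γ hβ hγ
    funext x
    have h1 := integrand_integrable (μ := μ) hβ.1.continuous hβ.2.1 hf.1.continuous x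
    have h2 := integrand_integrable (μ := μ) hγ.1.continuous hγ.2.1 hf.1.continuous x
    show (∫ ω, (β + γ) ω * f (ω⁻¹ * x) ∂μ) = (∫ ω, β ω * f (ω⁻¹ * x) ∂μ) + ∫ ω, γ ω * f (ω⁻¹ * x) ∂μ
    rw [← integral_add h1 h2]
    refine integral_congr_ae (Filter.Eventually.of_forall fun ω => ?_)
    simp [add_mul]
  · -- smul
    intro f hf c β hβ
    funext x
    show (∫ ω, (c • β) ω * f (ω⁻¹ * x) ∂μ) = c • ∫ ω, β ω * f (ω⁻¹ * x) ∂μ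
    have hrw : (fun ω => (c • β) ω * f (ω⁻¹ * x)) = fun ω => c • (β ω * f (ω⁻¹ * x)) := by
      funext ω
      simp [mul_assoc]
    rw [hrw, integral_smul]
  · -- equivariance
    intro f hf β hβ g z
    show (∫ ω, β (g⁻¹ * ω) * f (ω⁻¹ * z) ∂μ) = ∫ ω, β ω * f (ω⁻¹ * (g⁻¹ * z)) ∂μ
    have h1 := integral_mul_left_eq_self (μ := μ) (fun ω => β (g⁻¹ * ω) * f (ω⁻¹ * z)) g
    rw [← h1]
    have h2 : ∀ ω : G, β (g⁻¹ * (g * ω)) * f ((g * ω)⁻¹ * z) = β ω * f (ω⁻¹ * (g⁻¹ * z)) := by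
      intro ω
      have hrw : (g * ω)⁻¹ * z = ω⁻¹ * (g⁻¹ * z) := by group
      rw [inv_mul_cancel_left, hrw]
    simp only [h2]
  · -- anti-multiplicativity
    intro f h hf hh β hβ
    obtain ⟨T, hrep⟩ := exists_rep hOc hOo hβ
    obtain ⟨S, hrepf⟩ := exists_rep hOc hOo (hecke_ccr hf)
    have hfh_eq : hConv μ f h = fun x => ∑ s ∈ S, f s * h (s⁻¹ * x) :=
      funext fun x => conv_repr hμO hOc hOo hrepf hh.1.continuous (hecke_left hh) x
    have hfh_cont : Continuous (hConv μ f h) := by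
      rw [hfh_eq]
      exact (lc_sum S _ fun s _ => lc_term hh.1 (f s) s).continuous
    have hfh_left : ∀ y : G, ∀ ω ∈ O, hConv μ f h (ω * y) = hConv μ f h y :=
      conv_left_inv (hecke_left hf)
    funext x
    -- LHS
    have hLHS : hConv μ β (hConv μ f h) x = ∑ t ∈ T, β t * hConv μ f h (t⁻¹ * x) :=
      conv_repr hμO hOc hOo hrep hfh_cont hfh_left x
    -- RHS
    have hβf : hConv μ β f = fun y => ∑ t ∈ T, β t * f (t⁻¹ * y) :=
      funext fun y => conv_repr hμO hOc hOo hrep hf.1.continuous (hecke_left hf) y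
    have hRHS : hConv μ (hConv μ β f) h x = ∑ t ∈ T, β t * hConv μ f h (t⁻¹ * x) := by
      have hint : ∀ t ∈ T, Integrable
          (fun ω => β t * (f (t⁻¹ * ω) * h (ω⁻¹ * x))) μ := by
        intro t _
        apply Continuous.integrable_of_hasCompactSupport
        · exact continuous_const.mul
            ((hf.1.continuous.comp (continuous_const.mul continuous_id)).mul
              (hh.1.continuous.comp (continuous_inv.mul continuous_const)))
        · refine HasCompactSupport.intro ((hf.2.1).smul t) fun ω hω => ?_
          have : t⁻¹ * ω ∉ tsupport f := by
            intro hmem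
            exact hω (by simpa using Set.smul_mem_smul_set (a := t) hmem)
          rw [image_eq_zero_of_notMem_tsupport this, zero_mul, mul_zero]
      rw [hβf]
      calc hConv μ (fun y => ∑ t ∈ T, β t * f (t⁻¹ * y)) h x
          = ∫ ω, ∑ t ∈ T, β t * (f (t⁻¹ * ω) * h (ω⁻¹ * x)) ∂μ :=
            integral_congr_ae (Filter.Eventually.of_forall fun ω => by
              show (∑ t ∈ T, β t * f (t⁻¹ * ω)) * h (ω⁻¹ * x) = _
              rw [Finset.sum_mul]
              exact Finset.sum_congr rfl fun t _ => mul_assoc _ _ _)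
        _ = ∑ t ∈ T, ∫ ω, β t * (f (t⁻¹ * ω) * h (ω⁻¹ * x)) ∂μ := integral_finset_sum T hint
        _ = ∑ t ∈ T, β t * hConv μ f h (t⁻¹ * x) :=
            Finset.sum_congr rfl fun t _ => by rw [integral_const_mul, translate_conv f h t x]
    rw [hLHS, hRHS]
  · -- injectivity
    intro f₁ f₂ hf₁ hf₂ hconv
    funext x
    have h := congrFun (hconv _ (indO_ccr hOc hOo)) x
    rw [conv_indO hμO hOo (hecke_left hf₁) x, conv_indO hμO hOo (hecke_left hf₂) x] at h
    exact h
  · -- surjectivity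
    intro Φ hΦ
    set e : M := ⟨(O : Set G).indicator (1 : G → ℂ), (hM _).2 (indO_ccr hOc hOo)⟩ with he_def
    set f : G → ℂ := (Φ e : G → ℂ) with hf_def
    have hfM : IsCcRInv O f := (hM _).1 (Φ e).2
    have hlf : ∀ ω ∈ O, ∀ x, f x = f (ω⁻¹ * x) := by
      intro ω hω x
      have he : ((e : G → ℂ)) = fun x => (e : G → ℂ) (ω⁻¹ * x) := by
        funext y
        show (O : Set G).indicator (1 : G → ℂ) y = (O : Set G).indicator (1 : G → ℂ) (ω⁻¹ * y)
        have hiff : ω⁻¹ * y ∈ (O : Set G) ↔ y ∈ (O : Set G) := by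
          constructor
          · intro hm
            have := mul_mem hω hm
            rwa [mul_inv_cancel_left] at this
          · intro hm
            exact mul_mem (inv_mem hω) hm
        by_cases hy : y ∈ (O : Set G)
        · rw [Set.indicator_of_mem hy, Set.indicator_of_mem (hiff.2 hy)]
          rfl
        · rw [Set.indicator_of_notMem hy, Set.indicator_of_notMem (fun h => hy (hiff.1 h))]
      exact congrFun (hΦ ω e e he) x
    have hfH : IsHeckeFun O f := by
      refine ⟨hfM.1, hfM.2.1, ?_⟩
      intro x ω₁ h₁ ω₂ h₂
      have hone : f (ω₁ * x * ω₂) = f (ω₁ * x) := hfM.2.2 (ω₁ * x) ω₂ h₂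
      have htwo : f (ω₁ * x) = f x := by
        have := hlf ω₁⁻¹ (inv_mem h₁) x
        simpa using this.symm
      rw [hone, htwo]
    refine ⟨f, hfH, ?_⟩
    intro β
    have hβ : IsCcRInv O (β : G → ℂ) := (hM _).1 β.2
    obtain ⟨T, hrep⟩ := exists_rep hOc hOo hβ
    set γ : G → M := fun t => ⟨(t • (O : Set G)).indicator (1 : G → ℂ),
      (hM _).2 (cosetInd_ccr hOc hOo t)⟩ with hγ_def
    have hβsum : β = ∑ t ∈ T, (β : G → ℂ) t • γ t := by
      apply Subtype.ext
      have hco : ((∑ t ∈ T, (β : G → ℂ) t • γ t : M) : G → ℂ)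
          = ∑ t ∈ T, ((β : G → ℂ) t • (γ t : G → ℂ)) := by
        rw [AddSubmonoidClass.coe_finset_sum]
        exact Finset.sum_congr rfl fun t _ => rfl
      rw [hco]
      funext x
      rw [Finset.sum_apply]
      exact (hrep x).trans (Finset.sum_congr rfl fun t _ => by
        simp [hγ_def])
    have hΦγ : ∀ t : G, ((Φ (γ t)) : G → ℂ) = fun x => f (t⁻¹ * x) := by
      intro t
      refine hΦ t e (γ t) ?_
      funext y
      show (t • (O : Set G)).indicator (1 : G → ℂ) y
          = (O : Set G).indicator (1 : G → ℂ) (t⁻¹ * y)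
      by_cases hy : y ∈ t • (O : Set G)
      · have hmem : t⁻¹ * y ∈ (O : Set G) := by
          rwa [Set.mem_smul_set_iff_inv_smul_mem, smul_eq_mul] at hy
        rw [Set.indicator_of_mem hy, Set.indicator_of_mem hmem]
        rfl
      · have hmem : t⁻¹ * y ∉ (O : Set G) := by
          intro h
          exact hy (by rwa [Set.mem_smul_set_iff_inv_smul_mem, smul_eq_mul])
        rw [Set.indicator_of_notMem hy, Set.indicator_of_notMem hmem]
    have hΦsum : Φ β = ∑ t ∈ T, (β : G → ℂ) t • Φ (γ t) := by
      conv_lhs => rw [hβsum]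
      rw [map_sum]
      exact Finset.sum_congr rfl fun t _ => map_smul Φ _ _
    have hΦβ : ((Φ β) : G → ℂ) = fun x => ∑ t ∈ T, (β : G → ℂ) t * f (t⁻¹ * x) := by
      rw [hΦsum, AddSubmonoidClass.coe_finset_sum]
      funext x
      rw [Finset.sum_apply]
      refine Finset.sum_congr rfl fun t _ => ?_
      show (β : G → ℂ) t • ((Φ (γ t) : G → ℂ) x) = _
      rw [congrFun (hΦγ t) x, smul_eq_mul]
    rw [hΦβ]
    exact funext fun x => (conv_repr hμO hOc hOo hrep hfH.1.continuous
      (hecke_left hfH) x).symm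
end

section
/- Let G be a t.d.l.c. group, μ a left Haar measure on G, O a compact open subgroup, and g ∈ G. Then the subgroup O ∩ gOg⁻¹ has finite index in O, and μ(OgO) = [O : O ∩ gOg⁻¹] · μ(O), where OgO = {ω₁ g ω₂ : ω₁, ω₂ ∈ O} is the double coset of g. -/
open MeasureTheory
open scoped Pointwise ENNReal

/-- For a compact open subgroup `O` of a t.d.l.c. group `G` with left Haar
measure `μ` and `g ∈ G`, the subgroup `O ∩ gOg⁻¹` has finite index in `O` and
`μ(OgO) = [O : O ∩ gOg⁻¹] · μ(O)`. -/
theorem measure_double_coset_eq_index_mul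
    {G : Type*} [Group G] [TopologicalSpace G] [IsTopologicalGroup G]
    [LocallyCompactSpace G] [TotallyDisconnectedSpace G] [T2Space G]
    [MeasurableSpace G] [BorelSpace G]
    (μ : Measure G) [μ.IsHaarMeasure]
    (O : Subgroup G) (hOc : IsCompact (O : Set G)) (hOo : IsOpen (O : Set G))
    (g : G) :
    (O.map (MulAut.conj g).toMonoidHom).relIndex O ≠ 0 ∧
    μ ((O : Set G) * {g} * (O : Set G)) =
      ((O.map (MulAut.conj g).toMonoidHom).relIndex O : ℝ≥0∞) * μ (O : Set G) := by
  set K := O.map (MulAut.conj g).toMonoidHom with hK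
  have hKmem : ∀ x, x ∈ K ↔ ∃ c ∈ O, g * c * g⁻¹ = x := by
    intro x
    simp [hK, Subgroup.mem_map]
  -- K is open
  have hKo : IsOpen (K : Set G) := by
    have hKset : (K : Set G) = (fun x => g * x * g⁻¹) '' (O : Set G) := by
      ext x
      simp only [SetLike.mem_coe, hKmem, Set.mem_image, SetLike.mem_coe]
    rw [hKset]
    have : (fun x => g * x * g⁻¹) '' (O : Set G) =
        (Homeomorph.mulRight g⁻¹) '' ((Homeomorph.mulLeft g) '' (O : Set G)) := by
      rw [Set.image_image]; rfl
    rw [this]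
    exact (Homeomorph.mulRight g⁻¹).isOpen_image.mpr
      ((Homeomorph.mulLeft g).isOpen_image.mpr hOo)
  -- finite index
  haveI : CompactSpace O := isCompact_iff_compactSpace.mp hOc
  have hsubO : IsOpen ((K.subgroupOf O : Subgroup O) : Set O) := by
    have : ((K.subgroupOf O : Subgroup O) : Set O) = (Subtype.val) ⁻¹' (K : Set G) := rfl
    rw [this]
    exact hKo.preimage continuous_subtype_val
  haveI hfin : Finite (O ⧸ K.subgroupOf O) :=
    Subgroup.quotient_finite_of_isOpen _ hsubO
  haveI : Subgroup.FiniteIndex (K.subgroupOf O) := Subgroup.finiteIndex_of_finite_quotient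
  have hidx : K.relIndex O ≠ 0 := Subgroup.FiniteIndex.index_ne_zero
  refine ⟨hidx, ?_⟩
  -- decomposition
  set Q := O ⧸ K.subgroupOf O with hQ
  set S : Q → Set G := fun q => ((q.out : G) * g) • (O : Set G) with hS
  have hcover : (O : Set G) * {g} * (O : Set G) = ⋃ q : Q, S q := by
    ext x
    constructor
    · rintro ⟨y, hy, b, hb, rfl⟩
      obtain ⟨a, ha, g0, hg0, rfl⟩ := hy
      simp only [Set.mem_singleton_iff] at hg0
      subst g0
      set q : Q := QuotientGroup.mk ⟨a, ha⟩ with hq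
      have hmk : (QuotientGroup.mk q.out : Q) = QuotientGroup.mk ⟨a, ha⟩ := by
        rw [QuotientGroup.out_eq']
      rw [QuotientGroup.eq, Subgroup.mem_subgroupOf] at hmk
      rw [hKmem] at hmk
      obtain ⟨c, hc, hc'⟩ := hmk
      have hce : (q.out : G)⁻¹ * a = g * c * g⁻¹ := by
        simpa using hc'.symm
      refine Set.mem_iUnion.mpr ⟨q, ⟨c * b, O.mul_mem hc hb, ?_⟩⟩
      have ha' : a = (q.out : G) * (g * c * g⁻¹) := by rw [← hce]; group
      show ((q.out : G) * g) • (c * b) = a * g * b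
      rw [smul_eq_mul, ha']; group
    · intro hx
      obtain ⟨q, hq⟩ := Set.mem_iUnion.mp hx
      obtain ⟨b, hb, rfl⟩ := hq
      exact Set.mul_mem_mul (Set.mul_mem_mul (q.out).2 rfl) hb
  have hdisj : Pairwise (Function.onFun Disjoint S) := by
    intro q q' hne
    rw [Function.onFun, Set.disjoint_left]
    rintro x ⟨b, hb, rfl⟩ ⟨b', hb', heq⟩
    apply hne
    have heq' : (q.out : G) * g * b = (q'.out : G) * g * b' := by
      simpa [smul_eq_mul, mul_assoc] using heq.symm
    have hrel : (q'.out : G)⁻¹ * (q.out : G) = g * (b' * b⁻¹) * g⁻¹ := by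
      have : (q.out : G) = (q'.out : G) * g * b' * b⁻¹ * g⁻¹ := by
        rw [← heq']; group
      rw [this]; group
    have hmemK : (q'.out)⁻¹ * q.out ∈ K.subgroupOf O := by
      rw [Subgroup.mem_subgroupOf, hKmem]
      exact ⟨b' * b⁻¹, O.mul_mem hb' (O.inv_mem hb), by push_cast; rw [← hrel]⟩
    have : (QuotientGroup.mk q'.out : Q) = QuotientGroup.mk q.out :=
      (QuotientGroup.eq).mpr hmemK
    rw [QuotientGroup.out_eq', QuotientGroup.out_eq'] at this
    exact this.symm
  -- measure computation
  have hmeas : ∀ q : Q, MeasurableSet (S q) := fun q =>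
    ((Homeomorph.mulLeft ((q.out : G) * g)).isOpen_image.mpr hOo).measurableSet
  rw [hcover, measure_iUnion hdisj hmeas]
  have hμS : ∀ q : Q, μ (S q) = μ (O : Set G) := fun q => by
    rw [hS]; exact measure_smul (μ := μ) ((q.out : G) * g) (O : Set G)
  simp_rw [hμS]
  haveI : Fintype Q := Fintype.ofFinite Q
  rw [tsum_eq_sum (s := Finset.univ) (by simp)]
  rw [Finset.sum_const, Finset.card_univ, nsmul_eq_mul]
  congr 1
  have hrel : K.relIndex O = Nat.card Q := rfl
  rw [hrel, Nat.card_eq_fintype_card]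
end

section
/- Let G be a t.d.l.c. group, μ a left Haar measure on G, and let O ⊆ U be compact open subgroups of G, so the index n = [U : O] is finite. Then for every z ∈ G: μ(OzO)·μ(U) ≤ n·μ(UzU)·μ(O) and μ(UzU)·μ(O) ≤ n·μ(OzO)·μ(U). Equivalently, (1/n)·(μ(OzO)/μ(O)) ≤ μ(UzU)/μ(U) ≤ n·(μ(OzO)/μ(O)). -/
open MeasureTheory
open scoped Pointwise ENNReal

universe u_aux

section Aux

variable {G : Type*} [Group G] [TopologicalSpace G] [IsTopologicalGroup G]
  [LocallyCompactSpace G] [T2Space G] [MeasurableSpace G] [BorelSpace G]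

/-- Right translation by an element of a compact open subgroup preserves a left Haar
measure, on measurable sets with compact closure. -/
lemma aux_measure_mul_right (μ : Measure G) [μ.IsHaarMeasure]
    (U : Subgroup G) (hUc : IsCompact (U : Set G)) (hUo : IsOpen (U : Set G))
    {u : G} (hu : u ∈ U) {S : Set G} (hSm : MeasurableSet S) (hSc : IsCompact (closure S)) :
    μ (S * {u}) = μ S := by
  set μ' := Measure.map (· * u⁻¹) μ with hμ'
  have hmap : ∀ A : Set G, MeasurableSet A → μ' A = μ (A * {u}) := by
    intro A hA
    rw [hμ', Measure.map_apply (measurable_mul_const u⁻¹) hA]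
    congr 1
    ext x
    simp only [Set.mem_preimage, Set.mem_mul, Set.mem_singleton_iff]
    constructor
    · intro h
      exact ⟨x * u⁻¹, h, u, rfl, by group⟩
    · rintro ⟨a, ha, b, rfl, rfl⟩
      simpa using ha
  have hUu : (U : Set G) * {u} = (U : Set G) := by
    ext x
    constructor
    · rintro ⟨a, ha, b, hb, rfl⟩
      rcases Set.mem_singleton_iff.mp hb with rfl
      exact mul_mem ha hu
    · intro hx
      exact ⟨x * u⁻¹, mul_mem hx (inv_mem hu), u, rfl, by group⟩
  set c := Measure.haarScalarFactor μ' μ with hc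
  have hU1 : μ' (U : Set G) = (c : ℝ≥0∞) * μ (U : Set G) :=
    Measure.measure_isHaarMeasure_eq_smul_of_isOpen μ' μ hUo
  have hU2 : μ' (U : Set G) = μ (U : Set G) := by
    rw [hmap _ hUo.measurableSet, hUu]
  have hx0 : μ (U : Set G) ≠ 0 := (hUo.measure_pos μ ⟨1, U.one_mem⟩).ne'
  have hxt : μ (U : Set G) ≠ ∞ := hUc.measure_lt_top.ne
  have hc1 : (c : ℝ≥0∞) = 1 := by
    have h : (c : ℝ≥0∞) * μ (U : Set G) = 1 * μ (U : Set G) := by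
      rw [one_mul, ← hU1, hU2]
    exact (ENNReal.mul_left_inj hx0 hxt).mp h
  have := Measure.measure_isMulInvariant_eq_smul_of_isCompact_closure μ' μ (s := S) hSc
  rw [hmap S hSm] at this
  rw [this, ENNReal.smul_def, hc1, one_smul]

/-- Finitely many coset representatives for `O` in `U`. -/
lemma aux_exists_reps {G : Type u_aux} [Group G] [TopologicalSpace G] [IsTopologicalGroup G]
    (O U : Subgroup G) (hOU : O ≤ U)
    (hOo : IsOpen (O : Set G)) (hUc : IsCompact (U : Set G)) :
    ∃ (ι : Type u_aux) (_ : Fintype ι) (r : ι → G), Fintype.card ι = O.relIndex U ∧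
      (∀ i, r i ∈ U) ∧
      ((U : Set G) = ⋃ i, r i • (O : Set G)) ∧
      (Pairwise (Function.onFun Disjoint fun i => r i • (O : Set G))) ∧
      ((U : Set G) = ⋃ i, (O : Set G) * {(r i)⁻¹}) := by
  classical
  haveI : CompactSpace U := isCompact_iff_compactSpace.mp hUc
  have hopen : IsOpen ((O.subgroupOf U : Set U)) := by
    have h : (O.subgroupOf U : Set U) = Subtype.val ⁻¹' (O : Set G) := rfl
    rw [h]
    exact hOo.preimage continuous_subtype_val
  haveI : Finite (U ⧸ O.subgroupOf U) := Subgroup.quotient_finite_of_isOpen _ hopen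
  haveI : Fintype (U ⧸ O.subgroupOf U) := Fintype.ofFinite _
  refine ⟨U ⧸ O.subgroupOf U, inferInstance, fun q => ((Quotient.out q : U) : G), ?_, ?_, ?_, ?_, ?_⟩
  · rw [Subgroup.relIndex, Subgroup.index, Nat.card_eq_fintype_card]
  · intro i; exact (Quotient.out i : U).2
  · apply Set.Subset.antisymm
    · intro x hx
      set q : U ⧸ O.subgroupOf U := QuotientGroup.mk (⟨x, hx⟩ : U) with hq
      refine Set.mem_iUnion.mpr ⟨q, ?_⟩
      have hmk : QuotientGroup.mk (s := O.subgroupOf U) (Quotient.out q) =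
          QuotientGroup.mk (s := O.subgroupOf U) (⟨x, hx⟩ : U) := by
        rw [QuotientGroup.out_eq']
      have hmem : ((Quotient.out q)⁻¹ * (⟨x, hx⟩ : U)) ∈ O.subgroupOf U :=
        (QuotientGroup.eq (s := O.subgroupOf U)).mp hmk
      have hmemG : ((Quotient.out q : U) : G)⁻¹ * x ∈ O := hmem
      exact ⟨((Quotient.out q : U) : G)⁻¹ * x, hmemG, by
        show ((Quotient.out q : U) : G) * (((Quotient.out q : U) : G)⁻¹ * x) = x
        group⟩
    · intro x hx
      rcases Set.mem_iUnion.mp hx with ⟨q, y, hy, rfl⟩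
      exact mul_mem (Quotient.out q : U).2 (hOU hy)
  · intro q q' hqq'
    simp only [Function.onFun]
    rw [Set.disjoint_left]
    rintro x ⟨y, hy, rfl⟩ ⟨y', hy', hxy⟩
    apply hqq'
    have hxy' : ((Quotient.out q' : U) : G) * y' = ((Quotient.out q : U) : G) * y := hxy
    have h2 : ((Quotient.out q : U) : G)⁻¹ * ((Quotient.out q' : U) : G) = y * y'⁻¹ := by
      calc ((Quotient.out q : U) : G)⁻¹ * ((Quotient.out q' : U) : G)
          = ((Quotient.out q : U) : G)⁻¹ * (((Quotient.out q' : U) : G) * y') * y'⁻¹ := by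
            group
        _ = ((Quotient.out q : U) : G)⁻¹ * (((Quotient.out q : U) : G) * y) * y'⁻¹ := by
            rw [hxy']
        _ = y * y'⁻¹ := by group
    have h1 : ((Quotient.out q : U) : G)⁻¹ * ((Quotient.out q' : U) : G) ∈ O := by
      rw [h2]
      exact mul_mem hy (inv_mem hy')
    have hmem : ((Quotient.out q)⁻¹ * (Quotient.out q')) ∈ O.subgroupOf U := h1
    have := (QuotientGroup.eq (s := O.subgroupOf U)).mpr hmem
    rwa [QuotientGroup.out_eq', QuotientGroup.out_eq'] at this
  · apply Set.Subset.antisymm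
    · intro x hx
      set q : U ⧸ O.subgroupOf U := QuotientGroup.mk ((⟨x, hx⟩ : U)⁻¹) with hq
      refine Set.mem_iUnion.mpr ⟨q, ?_⟩
      have hmk : QuotientGroup.mk (s := O.subgroupOf U) (Quotient.out q) =
          QuotientGroup.mk (s := O.subgroupOf U) ((⟨x, hx⟩ : U)⁻¹) := by
        rw [QuotientGroup.out_eq']
      have hmem : ((Quotient.out q)⁻¹ * (⟨x, hx⟩ : U)⁻¹) ∈ O.subgroupOf U :=
        (QuotientGroup.eq (s := O.subgroupOf U)).mp hmk
      have hmemG : ((Quotient.out q : U) : G)⁻¹ * x⁻¹ ∈ O := hmem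
      have hmemG' : x * ((Quotient.out q : U) : G) ∈ O := by
        have := inv_mem hmemG
        simpa [mul_inv_rev] using this
      exact ⟨x * ((Quotient.out q : U) : G), hmemG', ((Quotient.out q : U) : G)⁻¹,
        rfl, by group⟩
    · intro x hx
      rcases Set.mem_iUnion.mp hx with ⟨q, y, hy, g, hg, rfl⟩
      rcases Set.mem_singleton_iff.mp hg with rfl
      exact mul_mem (hOU hy) (inv_mem (Quotient.out q : U).2)

end Aux

/-- Let `O ⊆ U` be compact open subgroups of a t.d.l.c. group `G` with left
Haar measure `μ`, and `n = [U : O]` (finite). Then for every `z ∈ G`: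
`μ(OzO)·μ(U) ≤ n·μ(UzU)·μ(O)` and `μ(UzU)·μ(O) ≤ n·μ(OzO)·μ(U)`. -/
theorem double_coset_measures_comparison
    {G : Type*} [Group G] [TopologicalSpace G] [IsTopologicalGroup G]
    [LocallyCompactSpace G] [TotallyDisconnectedSpace G] [T2Space G]
    [MeasurableSpace G] [BorelSpace G]
    (μ : Measure G) [μ.IsHaarMeasure]
    (O U : Subgroup G) (hOU : O ≤ U)
    (hOc : IsCompact (O : Set G)) (hOo : IsOpen (O : Set G))
    (hUc : IsCompact (U : Set G)) (hUo : IsOpen (U : Set G))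
    (z : G) :
    O.relIndex U ≠ 0 ∧
    μ ((O : Set G) * {z} * (O : Set G)) * μ (U : Set G) ≤
      (O.relIndex U : ℝ≥0∞) *
        (μ ((U : Set G) * {z} * (U : Set G)) * μ (O : Set G)) ∧
    μ ((U : Set G) * {z} * (U : Set G)) * μ (O : Set G) ≤
      (O.relIndex U : ℝ≥0∞) *
        (μ ((O : Set G) * {z} * (O : Set G)) * μ (U : Set G)) := by
  classical
  obtain ⟨ι, hfin, r, hcard, hrU, hdecomp, hdisj, hdecomp'⟩ :=
    aux_exists_reps O U hOU hOo hUc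
  set n : ℕ := O.relIndex U with hn
  have hn0 : n ≠ 0 := by
    haveI : CompactSpace U := isCompact_iff_compactSpace.mp hUc
    have hopen : IsOpen ((O.subgroupOf U : Set U)) := by
      have h : (O.subgroupOf U : Set U) = Subtype.val ⁻¹' (O : Set G) := rfl
      rw [h]; exact hOo.preimage continuous_subtype_val
    haveI : Finite (U ⧸ O.subgroupOf U) := Subgroup.quotient_finite_of_isOpen _ hopen
    exact Subgroup.index_ne_zero_of_finite
  -- μ U = n * μ O
  have hmeasU : μ (U : Set G) = (n : ℝ≥0∞) * μ (O : Set G) := by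
    rw [hdecomp, measure_iUnion hdisj (fun i => ((hOo.smul (r i)).measurableSet)),
      tsum_fintype]
    simp only [measure_smul]
    rw [Finset.sum_const, Finset.card_univ, hcard, nsmul_eq_mul, hn]
  -- left covering bound
  have hleft : ∀ S : Set G, μ ((U : Set G) * S) ≤ (n : ℝ≥0∞) * μ ((O : Set G) * S) := by
    intro S
    have h1 : (U : Set G) * S = ⋃ i, r i • ((O : Set G) * S) := by
      rw [hdecomp, Set.iUnion_mul]
      simp_rw [smul_mul_assoc]
    calc μ ((U : Set G) * S) ≤ ∑' i, μ (r i • ((O : Set G) * S)) := by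
            rw [h1]; exact measure_iUnion_le _
      _ = ∑' _i : ι, μ ((O : Set G) * S) := by simp [measure_smul]
      _ = (n : ℝ≥0∞) * μ ((O : Set G) * S) := by
            rw [tsum_fintype, Finset.sum_const, Finset.card_univ, hcard, nsmul_eq_mul, hn]
  -- right covering bound
  have hright : ∀ S : Set G, MeasurableSet (S * (O : Set G)) →
      IsCompact (closure (S * (O : Set G))) →
      μ (S * (U : Set G)) ≤ (n : ℝ≥0∞) * μ (S * (O : Set G)) := by
    intro S hSm hSc
    have h1 : S * (U : Set G) = ⋃ i, (S * (O : Set G)) * {(r i)⁻¹} := by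
      rw [hdecomp', Set.mul_iUnion]
      simp_rw [mul_assoc]
    calc μ (S * (U : Set G)) ≤ ∑' i, μ ((S * (O : Set G)) * {(r i)⁻¹}) := by
            rw [h1]; exact measure_iUnion_le _
      _ = ∑' _i : ι, μ (S * (O : Set G)) := by
            congr 1; ext i
            exact aux_measure_mul_right μ U hUc hUo (inv_mem (hrU i)) hSm hSc
      _ = (n : ℝ≥0∞) * μ (S * (O : Set G)) := by
            rw [tsum_fintype, Finset.sum_const, Finset.card_univ, hcard, nsmul_eq_mul, hn]
  -- basic monotonicity
  have hmono : μ ((O : Set G) * {z} * (O : Set G)) ≤ μ ((U : Set G) * {z} * (U : Set G)) :=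
    measure_mono (Set.mul_subset_mul (Set.mul_subset_mul_right hOU) hOU)
  refine ⟨hn0, ?_, ?_⟩
  · calc μ ((O : Set G) * {z} * (O : Set G)) * μ (U : Set G)
        = (n : ℝ≥0∞) * (μ ((O : Set G) * {z} * (O : Set G)) * μ (O : Set G)) := by
          rw [hmeasU]; ring
      _ ≤ (n : ℝ≥0∞) * (μ ((U : Set G) * {z} * (U : Set G)) * μ (O : Set G)) := by
          exact mul_le_mul_right (mul_le_mul_left hmono _) _
  · -- μ(UzU) ≤ n * μ(O z U) ≤ n^2 * μ(O z O)
    have step1 : μ ((U : Set G) * {z} * (U : Set G)) ≤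
        (n : ℝ≥0∞) * μ ((O : Set G) * {z} * (U : Set G)) := by
      have h := hleft (({z} : Set G) * (U : Set G))
      rw [← mul_assoc, ← mul_assoc] at h
      exact h
    have hOzO_open : IsOpen ((O : Set G) * {z} * (O : Set G)) := hOo.mul_left
    have hOzO_compact : IsCompact ((O : Set G) * {z} * (O : Set G)) :=
      (hOc.mul isCompact_singleton).mul hOc
    have step2 : μ ((O : Set G) * {z} * (U : Set G)) ≤
        (n : ℝ≥0∞) * μ ((O : Set G) * {z} * (O : Set G)) :=
      hright ((O : Set G) * {z}) hOzO_open.measurableSet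
        (by rw [hOzO_compact.isClosed.closure_eq]; exact hOzO_compact)
    calc μ ((U : Set G) * {z} * (U : Set G)) * μ (O : Set G)
        ≤ ((n : ℝ≥0∞) * ((n : ℝ≥0∞) * μ ((O : Set G) * {z} * (O : Set G)))) * μ (O : Set G) := by
          exact mul_le_mul_left (step1.trans (mul_le_mul_right step2 _)) _
      _ = (n : ℝ≥0∞) * (μ ((O : Set G) * {z} * (O : Set G)) * ((n : ℝ≥0∞) * μ (O : Set G))) := by
          ring
      _ = (n : ℝ≥0∞) * (μ ((O : Set G) * {z} * (O : Set G)) * μ (U : Set G)) := by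
          rw [hmeasU]
end

section
/- Let G be a t.d.l.c. group with left Haar measure μ. Say that a compact open subgroup O of G satisfies the double coset property if for every natural number n the set of double cosets D ∈ O\G/O with μ(D) = n·μ(O) is finite. Then: if G satisfies the double coset property with respect to some compact open subgroup, it satisfies the double coset property with respect to every compact open subgroup. -/
open MeasureTheory
open scoped Pointwise ENNReal

/-- A compact open subgroup `O` of a t.d.l.c. group `G` (with left Haar
measure `μ`) satisfies the *double coset property* if for every `n : ℕ` there
are only finitely many double cosets `OgO` with `μ(OgO) = n·μ(O)`. -/
def DoubleCosetProperty {G : Type*} [Group G] [TopologicalSpace G]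
    [MeasurableSpace G] (μ : Measure G) (O : Subgroup G) : Prop :=
  ∀ n : ℕ,
    {D : Set G | (∃ g : G, D = (O : Set G) * {g} * (O : Set G)) ∧
      μ D = (n : ℝ≥0∞) * μ (O : Set G)}.Finite

section Aux
set_option linter.unusedSectionVars false

open Set DoubleCoset

variable {G : Type*} [Group G] [TopologicalSpace G] [IsTopologicalGroup G]
    [LocallyCompactSpace G] [T2Space G]
    [MeasurableSpace G] [BorelSpace G]

lemma DCPaux.isOpen_doset {O O' : Subgroup G} (h : IsOpen (O' : Set G)) (g : G) :
    IsOpen (doubleCoset g (O : Set G) (O' : Set G)) :=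
  IsOpen.mul_left h

lemma DCPaux.isCompact_doset {O O' : Subgroup G} (hO : IsCompact (O : Set G))
    (hO' : IsCompact (O' : Set G)) (g : G) :
    IsCompact (doubleCoset g (O : Set G) (O' : Set G)) :=
  (hO.mul isCompact_singleton).mul hO'

/-- Right translation by an element of a compact open subgroup preserves the
measure of compact open sets. -/
lemma DCPaux.measure_mul_right (μ : Measure G) [μ.IsHaarMeasure]
    {O : Subgroup G} (hOc : IsCompact (O : Set G)) (hOo : IsOpen (O : Set G))
    {u : G} (hu : u ∈ O) {B : Set G} (hBo : IsOpen B) (hBc : IsCompact B) :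
    μ (B * {u}) = μ B := by
  classical
  set ν : Measure G := μ.map (· * u) with hν
  haveI : ν.IsMulLeftInvariant := by
    rw [hν]; infer_instance
  haveI : IsFiniteMeasureOnCompacts ν := by
    constructor
    intro K hK
    rw [hν, Measure.map_apply (measurable_mul_const u) hK.isClosed.measurableSet]
    have hpre : (· * u) ⁻¹' K = (fun x => x * u⁻¹) '' K := by
      ext x
      constructor
      · intro hx
        exact ⟨x * u, hx, by group⟩
      · rintro ⟨y, hy, rfl⟩
        simpa using hy
    rw [hpre]
    exact (hK.image (continuous_mul_right u⁻¹)).measure_lt_top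
  have key : ∀ s : Set G, IsCompact (closure s) →
      ν s = (Measure.haarScalarFactor ν μ) • μ s := fun s hs =>
    Measure.measure_isMulInvariant_eq_smul_of_isCompact_closure ν μ hs
  have hμO0 : μ (O : Set G) ≠ 0 :=
    (hOo.measure_pos μ ⟨1, O.one_mem⟩).ne'
  have hμOtop : μ (O : Set G) ≠ ∞ := hOc.measure_lt_top.ne
  have hνO : ν (O : Set G) = μ (O : Set G) := by
    rw [hν, Measure.map_apply (measurable_mul_const u) hOo.measurableSet]
    congr 1
    ext x
    simp only [Set.mem_preimage, SetLike.mem_coe]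
    exact ⟨fun hx => by simpa using mul_mem hx (inv_mem hu), fun hx => mul_mem hx hu⟩
  set c : NNReal := Measure.haarScalarFactor ν μ with hcdef
  have hc : (c : ℝ≥0∞) = 1 := by
    have h1 : ν (O : Set G) = c • μ (O : Set G) :=
      key _ (by rw [hOc.isClosed.closure_eq]; exact hOc)
    rw [hνO, ENNReal.smul_def, smul_eq_mul] at h1
    exact (ENNReal.mul_eq_right hμO0 hμOtop).1 h1.symm
  have hBuo : IsOpen (B * ({u} : Set G)) := hBo.mul_right
  have hBuc : IsCompact (B * ({u} : Set G)) := hBc.mul isCompact_singleton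
  have h2 : ν (B * {u}) = μ B := by
    rw [hν, Measure.map_apply (measurable_mul_const u) hBuo.measurableSet]
    congr 1
    rw [Set.mul_singleton, Set.preimage_image_eq _ (mul_left_injective u)]
  have h3 : ν (B * {u}) = c • μ (B * {u}) :=
    key _ (by rw [hBuc.isClosed.closure_eq]; exact hBuc)
  rw [h2, ENNReal.smul_def, smul_eq_mul, hc, one_mul] at h3
  exact h3.symm

/-- Distinct left cosets of a subgroup are equal or disjoint. -/
lemma DCPaux.leftCoset_eq_or_disjoint (O : Subgroup G) (a b : G) :
    a • (O : Set G) = b • (O : Set G) ∨ Disjoint (a • (O : Set G)) (b • (O : Set G)) := by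
  by_cases hd : Disjoint (a • (O : Set G)) (b • (O : Set G))
  · exact Or.inr hd
  · left
    rw [Set.not_disjoint_iff] at hd
    obtain ⟨x, ⟨o₁, ho₁, rfl⟩, ⟨o₂, ho₂, hx⟩⟩ := hd
    have h1 : a • (O : Set G) = (a * o₁) • (O : Set G) := by
      rw [mul_smul, smul_coe_set ho₁]
    have h2 : b • (O : Set G) = (b * o₂) • (O : Set G) := by
      rw [mul_smul, smul_coe_set ho₂]
    rw [h1, h2]
    congr 1
    simpa [smul_eq_mul] using hx.symm

/-- A cover of a compact set by finitely many left cosets of an open subgroup. -/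
lemma DCPaux.exists_finite_left_cover {A : Set G} (hA : IsCompact A)
    {K : Subgroup G} (hKo : IsOpen (K : Set G)) :
    ∃ t : Finset G, ↑t ⊆ A ∧ A ⊆ ⋃ v ∈ t, v • (K : Set G) := by
  obtain ⟨b', hb'A, hb'fin, hcov⟩ := hA.elim_finite_subcover_image
    (b := A) (c := fun v => v • (K : Set G)) (fun v _ => hKo.smul v)
    (fun x hx => Set.mem_biUnion hx ⟨1, K.one_mem, mul_one x⟩)
  refine ⟨hb'fin.toFinset, by simpa using hb'A, ?_⟩
  simpa [Set.Finite.coe_toFinset] using hcov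

/-- A cover of a compact set by finitely many right cosets of an open subgroup,
with representatives inside the set. -/
lemma DCPaux.exists_finite_right_cover {A : Set G} (hA : IsCompact A)
    {K : Subgroup G} (hKo : IsOpen (K : Set G)) :
    ∃ t : Finset G, ↑t ⊆ A ∧ A ⊆ ⋃ u ∈ t, (K : Set G) * {u} := by
  obtain ⟨b', hb'A, hb'fin, hcov⟩ := hA.elim_finite_subcover_image
    (b := A) (c := fun u => (K : Set G) * {u}) (fun u _ => hKo.mul_right)
    (fun x hx => Set.mem_biUnion hx ⟨1, K.one_mem, x, rfl, one_mul x⟩)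
  refine ⟨hb'fin.toFinset, by simpa using hb'A, ?_⟩
  simpa [Set.Finite.coe_toFinset] using hcov

/-- The measure of a double coset of a compact open subgroup is a natural
multiple of the measure of the subgroup. -/
lemma DCPaux.exists_measure_doset_eq (μ : Measure G) [μ.IsHaarMeasure]
    {O : Subgroup G} (hOc : IsCompact (O : Set G)) (hOo : IsOpen (O : Set G)) (g : G) :
    ∃ k : ℕ, μ (doubleCoset g (O : Set G) (O : Set G)) = (k : ℝ≥0∞) * μ (O : Set G) := by
  classical
  set D := doubleCoset g (O : Set G) (O : Set G) with hD
  have hDc : IsCompact D := DCPaux.isCompact_doset hOc hOc g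
  obtain ⟨b', hb'D, hb'fin, hcov⟩ := hDc.elim_finite_subcover_image
    (b := D) (c := fun v => v • (O : Set G)) (fun v _ => hOo.smul v)
    (fun x hx => Set.mem_biUnion hx ⟨1, O.one_mem, mul_one x⟩)
  have hsub : ∀ a ∈ b', a • (O : Set G) ⊆ D := by
    intro a ha x hx
    obtain ⟨o, ho, rfl⟩ := hx
    have haD := hb'D ha
    rw [hD, mem_doubleCoset] at haD ⊢
    obtain ⟨h1, hh1, k1, hk1, rfl⟩ := haD
    refine ⟨h1, hh1, k1 * o, mul_mem hk1 ho, ?_⟩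
    simp [smul_eq_mul, mul_assoc]
  set t := hb'fin.toFinset with ht
  set F : Finset (Set G) := t.image (fun v => v • (O : Set G)) with hF
  have hDeq : D = ⋃ s ∈ F, s := by
    apply Set.Subset.antisymm
    · intro x hx
      have := hcov hx
      simp only [Set.mem_iUnion] at this
      obtain ⟨v, hv, hxv⟩ := this
      exact Set.mem_biUnion (Finset.mem_image_of_mem _ (by simpa [ht] using hv)) hxv
    · intro x hx
      simp only [Set.mem_iUnion] at hx
      obtain ⟨s, hs, hxs⟩ := hx
      obtain ⟨v, hv, rfl⟩ := Finset.mem_image.1 hs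
      exact hsub v (by simpa [ht] using hv) hxs
  have hdisj : (F : Set (Set G)).Pairwise (Function.onFun Disjoint fun s : Set G => s) := by
    intro s₁ hs₁ s₂ hs₂ hne
    obtain ⟨v₁, _, rfl⟩ := Finset.mem_image.1 (by exact_mod_cast hs₁)
    obtain ⟨v₂, _, rfl⟩ := Finset.mem_image.1 (by exact_mod_cast hs₂)
    rcases DCPaux.leftCoset_eq_or_disjoint O v₁ v₂ with h | h
    · exact absurd h hne
    · exact h
  have hmeas : ∀ s ∈ F, MeasurableSet s := by
    intro s hs
    obtain ⟨v, _, rfl⟩ := Finset.mem_image.1 hs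
    exact (hOo.smul v).measurableSet
  refine ⟨F.card, ?_⟩
  have hsum := measure_biUnion_finset (μ := μ) (s := F) (f := fun s : Set G => s) hdisj hmeas
  rw [hDeq, hsum]
  have : ∀ s ∈ F, μ s = μ (O : Set G) := by
    intro s hs
    obtain ⟨v, _, rfl⟩ := Finset.mem_image.1 hs
    exact measure_smul (μ := μ) v (O : Set G)
  rw [Finset.sum_congr rfl this, Finset.sum_const, nsmul_eq_mul]

/-- Key estimate: the measure of an `O`-double coset is bounded by a multiple
of the measure of the corresponding `K`-double coset. -/
lemma DCPaux.measure_doset_le (μ : Measure G) [μ.IsHaarMeasure]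
    {O K : Subgroup G} (hOc : IsCompact (O : Set G)) (hOo : IsOpen (O : Set G))
    (hKc : IsCompact (K : Set G)) (hKo : IsOpen (K : Set G)) (hKO : K ≤ O)
    {t t' : Finset G} (ht' : ↑t' ⊆ (O : Set G))
    (hcovl : (O : Set G) ⊆ ⋃ v ∈ t, v • (K : Set G))
    (hcovr : (O : Set G) ⊆ ⋃ u ∈ t', (K : Set G) * {u}) (g : G) :
    μ (doubleCoset g (O : Set G) (O : Set G)) ≤
      (t.card : ℝ≥0∞) * t'.card * μ (doubleCoset g (K : Set G) (K : Set G)) := by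
  classical
  have hKgK_o : IsOpen (doubleCoset g (K : Set G) (K : Set G)) := DCPaux.isOpen_doset hKo g
  have hKgK_c : IsCompact (doubleCoset g (K : Set G) (K : Set G)) := DCPaux.isCompact_doset hKc hKc g
  have hsub : doubleCoset g (O : Set G) (O : Set G) ⊆
      ⋃ v ∈ t, ⋃ u ∈ t', v • (doubleCoset g (K : Set G) (K : Set G) * {u}) := by
    intro y hy
    rw [mem_doubleCoset] at hy
    obtain ⟨a, ha, b, hb, rfl⟩ := hy
    have hacov := hcovl ha
    simp only [Set.mem_iUnion, Set.mem_smul_set] at hacov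
    obtain ⟨v, hv, k₁, hk₁, rfl⟩ := hacov
    have hbcov := hcovr hb
    simp only [Set.mem_iUnion, Set.mul_singleton, Set.mem_image] at hbcov
    obtain ⟨u, hu, z, hzK, hzw⟩ := hbcov
    subst hzw
    refine Set.mem_biUnion hv (Set.mem_biUnion hu ?_)
    refine ⟨k₁ * g * z * u, ?_, by simp [smul_eq_mul]; group⟩
    exact Set.mul_mem_mul (by rw [mem_doubleCoset]; exact ⟨k₁, hk₁, z, hzK, rfl⟩) rfl
  calc μ (doubleCoset g (O : Set G) (O : Set G))
      ≤ ∑ v ∈ t, μ (⋃ u ∈ t', v • (doubleCoset g (K : Set G) (K : Set G) * {u})) :=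
        le_trans (measure_mono hsub) (measure_biUnion_finset_le _ _)
    _ ≤ ∑ v ∈ t, ∑ u ∈ t', μ (v • (doubleCoset g (K : Set G) (K : Set G) * {u})) :=
        Finset.sum_le_sum (fun v _ => measure_biUnion_finset_le _ _)
    _ = ∑ _v ∈ t, ∑ u ∈ t', μ (doubleCoset g (K : Set G) (K : Set G) * {u}) := by
        simp_rw [measure_smul (μ := μ)]
    _ = ∑ _v ∈ t, ∑ u ∈ t', μ (doubleCoset g (K : Set G) (K : Set G)) := by
        refine Finset.sum_congr rfl (fun v _ => Finset.sum_congr rfl (fun u hu => ?_))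
        exact DCPaux.measure_mul_right μ hOc hOo (ht' hu) hKgK_o hKgK_c
    _ = (t.card : ℝ≥0∞) * t'.card * μ (doubleCoset g (K : Set G) (K : Set G)) := by
        simp [Finset.sum_const, nsmul_eq_mul]; ring

/-- A family of `O'`-double cosets each of which meets a fixed compact set is
finite. -/
lemma DCPaux.fiber_finite (μ : Measure G) [μ.IsHaarMeasure]
    {O' : Subgroup G} (hO'c : IsCompact (O' : Set G)) (hO'o : IsOpen (O' : Set G))
    {B : Set G} (hB : IsCompact B) {S : Set (Set G)}
    (hS : ∀ D ∈ S, ∃ g : G, D = doubleCoset g (O' : Set G) (O' : Set G) ∧ g ∈ B) :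
    S.Finite := by
  classical
  have hμO'0 : (0 : ℝ≥0∞) < μ (O' : Set G) := hO'o.measure_pos μ ⟨1, O'.one_mem⟩
  have hmeas : ∀ D : S, MeasurableSet (D : Set G) := by
    rintro ⟨D, hD⟩
    obtain ⟨g, rfl, -⟩ := hS D hD
    exact (DCPaux.isOpen_doset hO'o g).measurableSet
  have hdisj : Pairwise (Function.onFun Disjoint fun D : S => (D : Set G)) := by
    rintro ⟨D₁, hD₁⟩ ⟨D₂, hD₂⟩ hne
    obtain ⟨g₁, h₁, -⟩ := hS D₁ hD₁
    obtain ⟨g₂, h₂, -⟩ := hS D₂ hD₂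
    by_contra hnd
    apply hne
    apply Subtype.ext
    show D₁ = D₂
    rw [h₁, h₂]
    apply DoubleCoset.eq_of_not_disjoint
    rw [← h₁, ← h₂]
    exact hnd
  have hunion : μ (⋃ D : S, (D : Set G)) ≠ ∞ := by
    have hsub : (⋃ D : S, (D : Set G)) ⊆ (O' : Set G) * B * (O' : Set G) := by
      rintro x hx
      simp only [Set.mem_iUnion] at hx
      obtain ⟨⟨D, hD⟩, hxD⟩ := hx
      obtain ⟨g, rfl, hgB⟩ := hS D hD
      exact Set.mul_subset_mul (Set.mul_subset_mul_left (Set.singleton_subset_iff.2 hgB))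
        le_rfl hxD
    exact (lt_of_le_of_lt (measure_mono hsub)
      (((hO'c.mul hB).mul hO'c).measure_lt_top)).ne
  have hge : ∀ D : S, μ (O' : Set G) ≤ μ (D : Set G) := by
    rintro ⟨D, hD⟩
    obtain ⟨g, rfl, -⟩ := hS D hD
    have hsub : g • (O' : Set G) ⊆ doubleCoset g (O' : Set G) (O' : Set G) := by
      rintro x ⟨o, ho, rfl⟩
      rw [mem_doubleCoset]
      exact ⟨1, O'.one_mem, o, ho, by simp [smul_eq_mul]⟩
    calc μ (O' : Set G) = μ (g • (O' : Set G)) := (measure_smul (μ := μ) g (O' : Set G)).symm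
      _ ≤ _ := measure_mono hsub
  have hfin := MeasureTheory.Measure.finite_const_le_meas_of_disjoint_iUnion μ hμO'0 hmeas hdisj hunion
  have : {D : S | μ (O' : Set G) ≤ μ (D : Set G)} = Set.univ :=
    Set.eq_univ_of_forall (fun D => hge D)
  rw [this] at hfin
  have : Finite S := Set.finite_univ_iff.1 hfin
  exact Set.toFinite S

end Aux

/-- If a t.d.l.c. group `G` satisfies the double coset property with respect
to some compact open subgroup, then it satisfies it with respect to every
compact open subgroup. -/
theorem doubleCosetProperty_of_exists
    {G : Type*} [Group G] [TopologicalSpace G] [IsTopologicalGroup G]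
    [LocallyCompactSpace G] [TotallyDisconnectedSpace G] [T2Space G]
    [MeasurableSpace G] [BorelSpace G]
    (μ : Measure G) [μ.IsHaarMeasure]
    (h : ∃ O : Subgroup G, IsCompact (O : Set G) ∧ IsOpen (O : Set G) ∧
      DoubleCosetProperty μ O) :
    ∀ O' : Subgroup G, IsCompact (O' : Set G) → IsOpen (O' : Set G) →
      DoubleCosetProperty μ O' := by
  classical
  obtain ⟨O, hOc, hOo, hODCP⟩ := h
  intro O' hO'c hO'o n
  set K : Subgroup G := O ⊓ O' with hK
  have hKcoe : (K : Set G) = (O : Set G) ∩ (O' : Set G) := Subgroup.coe_inf O O'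
  have hKo : IsOpen (K : Set G) := by rw [hKcoe]; exact hOo.inter hO'o
  have hKc : IsCompact (K : Set G) := by
    rw [hKcoe]
    exact hOc.inter_right (O'.isClosed_of_isOpen hO'o)
  have hKO : K ≤ O := inf_le_left
  have hKO' : K ≤ O' := inf_le_right
  have hμO0 : μ (O : Set G) ≠ 0 := (hOo.measure_pos μ ⟨1, O.one_mem⟩).ne'
  have hμOtop : μ (O : Set G) ≠ ∞ := hOc.measure_lt_top.ne
  have hμO'top : μ (O' : Set G) ≠ ∞ := hO'c.measure_lt_top.ne
  obtain ⟨t, -, hcovl⟩ := DCPaux.exists_finite_left_cover hOc hKo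
  obtain ⟨t', ht'O, hcovr⟩ := DCPaux.exists_finite_right_cover hOc hKo
  -- the "pick" function selecting a representative of each double coset
  set pick : Set G → G := fun D =>
    if hD : ∃ g : G, D = (O' : Set G) * {g} * (O' : Set G) then hD.choose else 1 with hpickdef
  set S : Set (Set G) := {D : Set G | (∃ g : G, D = (O' : Set G) * {g} * (O' : Set G)) ∧
      μ D = (n : ℝ≥0∞) * μ (O' : Set G)} with hS
  have hpick : ∀ D ∈ S, D = DoubleCoset.doubleCoset (pick D) (O' : Set G) (O' : Set G) := by
    intro D hD
    obtain ⟨hex, -⟩ := hD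
    rw [hpickdef]
    simp only [dif_pos hex]
    exact hex.choose_spec
  have hpickmem : ∀ D ∈ S, pick D ∈ D := by
    intro D hD
    have := DoubleCoset.mem_doubleCoset_self O' O' (pick D)
    rw [← hpick D hD] at this
    exact this
  -- the bound on the number of left O-cosets in the relevant O-double cosets
  set C : ℝ≥0∞ := (t.card : ℝ≥0∞) * t'.card * ((n : ℝ≥0∞) * μ (O' : Set G)) with hC
  have hCtop : C ≠ ∞ := by
    rw [hC]
    exact ENNReal.mul_ne_top (ENNReal.mul_ne_top (ENNReal.natCast_ne_top _)
      (ENNReal.natCast_ne_top _)) (ENNReal.mul_ne_top (ENNReal.natCast_ne_top _) hμO'top)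
  have hCdiv : C / μ (O : Set G) ≠ ∞ := (ENNReal.div_lt_top hCtop hμO0).ne
  obtain ⟨bnd, hbndlt⟩ := ENNReal.exists_nat_gt hCdiv
  set T : Set (Set G) := ⋃ k ∈ Finset.range (bnd + 1),
    {D : Set G | (∃ g : G, D = (O : Set G) * {g} * (O : Set G)) ∧
      μ D = (k : ℝ≥0∞) * μ (O : Set G)} with hT
  have hTfin : T.Finite :=
    Set.Finite.biUnion (Finset.range (bnd + 1)).finite_toSet (fun k _ => hODCP k)
  have hkey : ∀ D ∈ S, DoubleCoset.doubleCoset (pick D) (O : Set G) (O : Set G) ∈ T := by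
    intro D hD
    obtain ⟨k, hk⟩ := DCPaux.exists_measure_doset_eq μ hOc hOo (pick D)
    have hbound : μ (DoubleCoset.doubleCoset (pick D) (O : Set G) (O : Set G)) ≤ C := by
      have h1 := DCPaux.measure_doset_le μ hOc hOo hKc hKo hKO ht'O hcovl hcovr (pick D)
      have h2 : μ (DoubleCoset.doubleCoset (pick D) (K : Set G) (K : Set G)) ≤
          μ (DoubleCoset.doubleCoset (pick D) (O' : Set G) (O' : Set G)) := by
        apply measure_mono
        have hsub : (K : Set G) ⊆ (O' : Set G) := hKO'
        exact Set.mul_subset_mul (Set.mul_subset_mul_right hsub) hsub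
      have h3 : μ (DoubleCoset.doubleCoset (pick D) (O' : Set G) (O' : Set G)) =
          (n : ℝ≥0∞) * μ (O' : Set G) := by
        rw [← hpick D hD]; exact hD.2
      calc μ (DoubleCoset.doubleCoset (pick D) (O : Set G) (O : Set G))
          ≤ (t.card : ℝ≥0∞) * t'.card * μ (DoubleCoset.doubleCoset (pick D) (K : Set G) (K : Set G)) := h1
        _ ≤ (t.card : ℝ≥0∞) * t'.card * ((n : ℝ≥0∞) * μ (O' : Set G)) := by
            rw [← h3]
            exact mul_le_mul_right h2 _
    have hkle : k < bnd := by
      have h4 : (k : ℝ≥0∞) * μ (O : Set G) ≤ C := by rw [← hk]; exact hbound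
      have h5 : (k : ℝ≥0∞) ≤ C / μ (O : Set G) :=
        (ENNReal.le_div_iff_mul_le (Or.inl hμO0) (Or.inl hμOtop)).2 h4
      have h7 : (k : ℝ≥0∞) < (bnd : ℕ) := lt_of_le_of_lt h5 hbndlt
      exact_mod_cast h7
    rw [hT]
    refine Set.mem_biUnion (Finset.mem_range.2 (Nat.lt_succ_of_lt hkle)) ?_
    exact ⟨⟨pick D, rfl⟩, hk⟩
  have hScover : S ⊆ ⋃ E ∈ T,
      {D : Set G | D ∈ S ∧ DoubleCoset.doubleCoset (pick D) (O : Set G) (O : Set G) = E} := by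
    intro D hD
    exact Set.mem_biUnion (hkey D hD) ⟨hD, rfl⟩
  refine Set.Finite.subset (Set.Finite.biUnion hTfin ?_) hScover
  intro E hE
  -- each fiber is finite
  have hEc : IsCompact E := by
    rw [hT] at hE
    simp only [Set.mem_iUnion] at hE
    obtain ⟨k, -, ⟨g, rfl⟩, -⟩ := hE
    exact DCPaux.isCompact_doset hOc hOc g
  apply DCPaux.fiber_finite μ hO'c hO'o hEc
  intro D hD
  refine ⟨pick D, hpick D hD.1, ?_⟩
  rw [← hD.2]
  exact DoubleCoset.mem_doubleCoset_self O O (pick D)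
end

section
/- Let (W,S) be a Coxeter system with length function ℓ, and let J, K ⊆ S. Let x ∈ W be a minimal-length (W_J, W_K)-double coset representative, i.e., ℓ(x) ≤ ℓ(w) for every w ∈ W_J·x·W_K. Set K ∩ x⁻¹Jx = {s ∈ K : x s x⁻¹ ∈ J} and J ∩ xKx⁻¹ = {t ∈ J : x⁻¹ t x ∈ K}. Then the map c_x(w) = x w x⁻¹ restricts to a group isomorphism from the subgroup ⟨K ∩ x⁻¹Jx⟩ generated by K ∩ x⁻¹Jx onto the subgroup ⟨J ∩ xKx⁻¹⟩ generated by J ∩ xKx⁻¹, and it preserves length: ℓ(x w x⁻¹) = ℓ(w) for every w ∈ ⟨K ∩ x⁻¹Jx⟩. -/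
open CoxeterSystem List

namespace ConjAux

open scoped Classical

variable {B : Type*} {W : Type*} [Group W] {M : CoxeterMatrix B} (cs : CoxeterSystem M W)

local prefix:100 "s" => cs.simple
local prefix:100 "π" => cs.wordProd
local prefix:100 "ℓ" => cs.length
local prefix:100 "ris" => cs.rightInvSeq

/-- The sign-tracking conjugation map of Björner–Brenti. -/
noncomputable def etaFun (i : B) : W × ZMod 2 → W × ZMod 2 :=
  fun p => (s i * p.1 * s i, p.2 + if p.1 = s i then 1 else 0)

lemma simple_conj_eq_simple_iff (i : B) (u : W) :
    s i * u * s i = s i ↔ u = s i := by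
  constructor
  · intro h
    have h2 : s i * (s i * u * s i) * s i = s i * s i * s i := by rw [h]
    rw [show s i * (s i * u * s i) * s i = u by
      rw [← mul_assoc, ← mul_assoc, cs.simple_mul_simple_self, one_mul,
        mul_assoc, cs.simple_mul_simple_self, mul_one]] at h2
    rw [h2, cs.simple_mul_simple_self, one_mul]
  · rintro rfl
    rw [cs.simple_mul_simple_self, one_mul]

lemma etaFun_involutive (i : B) : Function.Involutive (etaFun cs i) := by
  intro p
  unfold etaFun
  have h1 : s i * (s i * p.1 * s i) * s i = p.1 := by
    rw [← mul_assoc, ← mul_assoc, cs.simple_mul_simple_self, one_mul,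
      mul_assoc, cs.simple_mul_simple_self, mul_one]
  ext
  · exact h1
  · show p.2 + _ + _ = p.2
    rw [if_congr (simple_conj_eq_simple_iff cs i p.1) rfl rfl]
    by_cases hp : p.1 = s i <;> simp [hp]
    rw [add_assoc, show (1:ZMod 2)+1 = 0 by decide, add_zero]

/-- The permutation version. -/
noncomputable def eta (i : B) : Equiv.Perm (W × ZMod 2) :=
  (etaFun_involutive cs i).toPerm

lemma eta_apply (i : B) (p : W × ZMod 2) :
    eta cs i p = (s i * p.1 * s i, p.2 + if p.1 = s i then 1 else 0) := rfl

lemma conj_eq_iff (g u v : W) : g * u * g⁻¹ = v ↔ u = g⁻¹ * v * g := by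
  constructor
  · rintro rfl; group
  · rintro rfl; group

section Braid

variable (i j : B)

lemma z_inv : (s i * s j)⁻¹ = s j * s i := by
  rw [mul_inv_rev, cs.inv_simple, cs.inv_simple]

lemma eta_apply' (i : B) (p : W × ZMod 2) :
    eta cs i p = (s i * p.1 * (s i)⁻¹, p.2 + if p.1 = s i then 1 else 0) := by
  rw [eta_apply, cs.inv_simple]

lemma simple_mul_z_pow (n : ℕ) :
    s j * (s i * s j) ^ n = ((s i * s j)⁻¹) ^ n * s j := by
  induction n with
  | zero => simp
  | succ n ih =>
    have h1 : s j * (s i * s j) = (s i * s j)⁻¹ * s j := by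
      rw [z_inv, mul_assoc]
    rw [pow_succ, ← mul_assoc, ih, mul_assoc, h1, ← mul_assoc, ← pow_succ]

lemma z_pow_conj_simple (n : ℕ) :
    ((s i * s j) ^ n)⁻¹ * s j * (s i * s j) ^ n
      = ((s i * s j)⁻¹) ^ (2 * n) * s j := by
  rw [mul_assoc, simple_mul_z_pow, ← mul_assoc, ← inv_pow, ← pow_add, two_mul]

lemma z_pow_conj_simple' (n : ℕ) :
    ((s i * s j) ^ n)⁻¹ * ((s i * s j)⁻¹ * s j) * (s i * s j) ^ n
      = ((s i * s j)⁻¹) ^ (2 * n + 1) * s j := by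
  have e1 : ((s i * s j) ^ n)⁻¹ * ((s i * s j)⁻¹ * s j) * (s i * s j) ^ n
      = ((s i * s j)⁻¹) ^ (n + 1) * (s j * (s i * s j) ^ n) := by
    rw [pow_succ, inv_pow]
    group
  rw [e1, simple_mul_z_pow, ← mul_assoc, ← pow_add,
    show n + 1 + n = 2 * n + 1 by ring]

lemma pair_apply (p : W × ZMod 2) :
    (eta cs i * eta cs j) p =
      ((s i * s j) * p.1 * (s i * s j)⁻¹,
       p.2 + ((if p.1 = s j then (1 : ZMod 2) else 0)
            + if p.1 = (s i * s j)⁻¹ * s j then 1 else 0)) := by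
  rw [Equiv.Perm.mul_apply, eta_apply', eta_apply']
  have hc : (s j * p.1 * (s j)⁻¹ = s i) ↔ (p.1 = (s i * s j)⁻¹ * s j) := by
    rw [conj_eq_iff, cs.inv_simple, z_inv]
  ext
  · show s i * (s j * p.1 * (s j)⁻¹) * (s i)⁻¹ = _
    group
  · show p.2 + _ + _ = _
    rw [if_congr hc rfl rfl, add_assoc]

lemma eta_pair_pow_formula (n : ℕ) (p : W × ZMod 2) :
    ((eta cs i * eta cs j) ^ n) p =
      ((s i * s j) ^ n * p.1 * ((s i * s j) ^ n)⁻¹,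
       p.2 + ∑ r ∈ Finset.range (2 * n),
         if p.1 = ((s i * s j)⁻¹) ^ r * s j then 1 else 0) := by
  induction n with
  | zero => simp
  | succ n ih =>
    rw [pow_succ', Equiv.Perm.mul_apply, ih, pair_apply]
    have t1 : ((s i * s j) ^ n * p.1 * ((s i * s j) ^ n)⁻¹ = s j)
        ↔ (p.1 = ((s i * s j)⁻¹) ^ (2 * n) * s j) := by
      rw [conj_eq_iff, z_pow_conj_simple]
    have t2 : ((s i * s j) ^ n * p.1 * ((s i * s j) ^ n)⁻¹ = (s i * s j)⁻¹ * s j)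
        ↔ (p.1 = ((s i * s j)⁻¹) ^ (2 * n + 1) * s j) := by
      rw [conj_eq_iff, z_pow_conj_simple']
    ext
    · show (s i * s j) * ((s i * s j) ^ n * p.1 * ((s i * s j) ^ n)⁻¹) * (s i * s j)⁻¹ = _
      rw [pow_succ', mul_inv_rev]
      simp only [mul_inv_rev, mul_assoc]
    · show p.2 + _ + _ = p.2 + _
      rw [if_congr t1 rfl rfl, if_congr t2 rfl rfl,
        show 2 * (n + 1) = (2 * n) + 1 + 1 by ring,
        Finset.sum_range_succ, Finset.sum_range_succ, add_assoc, add_assoc]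

lemma eta_liftable : M.IsLiftable (eta cs) := by
  intro i j
  apply Equiv.ext
  intro p
  have hzm : (s i * s j) ^ M i j = 1 := cs.simple_mul_simple_pow i j
  have hzm' : ((s i * s j)⁻¹) ^ M i j = 1 := by rw [inv_pow, hzm, inv_one]
  have hsum : (∑ r ∈ Finset.range (2 * M i j),
      if p.1 = ((s i * s j)⁻¹) ^ r * s j then (1 : ZMod 2) else 0) = 0 := by
    rw [two_mul, Finset.sum_range_add]
    have e : ∑ x ∈ Finset.range (M i j),
        (if p.1 = ((s i * s j)⁻¹) ^ (M i j + x) * s j then (1 : ZMod 2) else 0)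
        = ∑ x ∈ Finset.range (M i j),
        (if p.1 = ((s i * s j)⁻¹) ^ x * s j then (1 : ZMod 2) else 0) :=
      Finset.sum_congr rfl (fun r _ => by rw [pow_add, hzm', one_mul])
    rw [e]
    exact CharTwo.add_self_eq_zero _
  rw [eta_pair_pow_formula, hzm, hsum, add_zero, inv_one, one_mul, mul_one]
  rfl

end Braid

/-- The lifted homomorphism tracking inversion parity. -/
noncomputable def phi : W →* Equiv.Perm (W × ZMod 2) :=
  cs.lift ⟨eta cs, eta_liftable cs⟩

lemma phi_simple (i : B) : phi cs (s i) = eta cs i :=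
  cs.lift_apply_simple (eta_liftable cs) i

/-- Mod-2 indicator count of `t` in a list. -/
noncomputable def ind (t : W) (l : List W) : ZMod 2 :=
  (l.map (fun u => if t = u then (1 : ZMod 2) else 0)).sum

@[simp] lemma ind_nil (t : W) : ind t ([] : List W) = 0 := rfl

lemma ind_cons (t u : W) (l : List W) :
    ind t (u :: l) = (if t = u then 1 else 0) + ind t l := by
  simp [ind]

lemma ind_of_not_mem {t : W} {l : List W} (h : t ∉ l) : ind t l = 0 := by
  induction l with
  | nil => rfl
  | cons u l ih =>
    rw [ind_cons, if_neg (by rintro rfl; exact h mem_cons_self),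
      ih (fun hm => h (mem_cons_of_mem _ hm)), add_zero]

lemma ind_of_nodup_mem {t : W} {l : List W} (hn : l.Nodup) (h : t ∈ l) : ind t l = 1 := by
  induction l with
  | nil => simp at h
  | cons u l ih =>
    rw [ind_cons]
    rcases List.mem_cons.mp h with rfl | hm
    · rw [if_pos rfl, ind_of_not_mem (List.nodup_cons.mp hn).1, add_zero]
    · rw [if_neg (by rintro rfl; exact (List.nodup_cons.mp hn).1 hm),
        ih (List.nodup_cons.mp hn).2 hm, zero_add]

lemma phi_wordProd (ω : List B) (t : W) (ε : ZMod 2) :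
    phi cs (π ω) (t, ε) = (π ω * t * (π ω)⁻¹, ε + ind t (ris ω)) := by
  induction ω with
  | nil => simp [ind]
  | cons i ω ih =>
    have hris : ris (i :: ω) = ((π ω)⁻¹ * s i * π ω) :: ris ω := rfl
    rw [cs.wordProd_cons, map_mul, Equiv.Perm.mul_apply, ih, phi_simple, eta_apply']
    have hcond : (π ω * t * (π ω)⁻¹ = s i) ↔ (t = (π ω)⁻¹ * s i * π ω) := conj_eq_iff _ _ _
    ext
    · show s i * (π ω * t * (π ω)⁻¹) * (s i)⁻¹ = (s i * π ω) * t * (s i * π ω)⁻¹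
      rw [mul_inv_rev]
      simp only [mul_assoc]
    · show ε + ind t (ris ω) + _ = ε + ind t (ris (i :: ω))
      rw [if_congr hcond rfl rfl, hris, ind_cons, add_assoc, add_comm (ind t (ris ω))]

lemma ind_rightInvSeq_eq_of_wordProd_eq {ω ω' : List B} (h : π ω = π ω') (t : W) :
    ind t (ris ω) = ind t (ris ω') := by
  have h1 := phi_wordProd cs ω t 0
  have h2 := phi_wordProd cs ω' t 0
  rw [h] at h1
  rw [h1] at h2
  have := congrArg Prod.snd h2
  simpa using this

lemma simple_mem_rightInvSeq {ω : List B} (hred : cs.IsReduced ω) (i : B)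
    (hdesc : ℓ (π ω * s i) < ℓ (π ω)) : s i ∈ ris ω := by
  obtain ⟨δ, hδlen, hδ⟩ := cs.exists_reduced_word (π ω * s i)
  have hδlen : δ.length = ℓ (π ω * s i) := by rw [hδ]; exact (hδlen : ℓ (π δ) = δ.length).symm
  have hω2 : π (δ ++ [i]) = π ω := by
    rw [cs.wordProd_append, cs.wordProd_singleton, ← hδ, mul_assoc,
      cs.simple_mul_simple_self, mul_one]
  have hlen : ℓ (π ω * s i) + 1 = ℓ (π ω) := by
    rcases cs.length_mul_simple (π ω) i with h | h
    · omega
    · exact h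
  have hred2 : cs.IsReduced (δ ++ [i]) := by
    show ℓ (π (δ ++ [i])) = (δ ++ [i]).length
    have hred' : ℓ (π ω) = ω.length := hred
    rw [hω2, List.length_append, hδlen, List.length_singleton]
    omega
  have hmem : s i ∈ ris (δ ++ [i]) := by
    rw [← List.concat_eq_append, cs.rightInvSeq_concat]
    simp
  have h1 : ind (s i) (ris (δ ++ [i])) = 1 :=
    ind_of_nodup_mem (hred2.nodup_rightInvSeq) hmem
  have h2 : ind (s i) (ris ω) = 1 := by
    rw [ind_rightInvSeq_eq_of_wordProd_eq cs hω2.symm, h1]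
  by_contra hnot
  rw [ind_of_not_mem hnot] at h2
  exact one_ne_zero h2.symm

lemma exchange {ω : List B} (hred : cs.IsReduced ω) (i : B)
    (hdesc : ℓ (π ω * s i) < ℓ (π ω)) :
    ∃ j < ω.length, π ω * s i = π (ω.eraseIdx j) := by
  have hmem := simple_mem_rightInvSeq cs hred i hdesc
  obtain ⟨j, hj, hget⟩ := List.mem_iff_getElem.mp hmem
  rw [cs.length_rightInvSeq] at hj
  refine ⟨j, hj, ?_⟩
  have := cs.wordProd_mul_getD_rightInvSeq ω j
  rw [List.getD_eq_getElem _ _ (by rw [cs.length_rightInvSeq]; exact hj), hget] at this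
  exact this

lemma wordProd_mem_closure {K : Set B} {ω : List B} (h : ∀ i ∈ ω, i ∈ K) :
    π ω ∈ Subgroup.closure (cs.simple '' K) := by
  induction ω with
  | nil => rw [cs.wordProd_nil]; exact one_mem _
  | cons i ω ih =>
    rw [cs.wordProd_cons]
    exact mul_mem (Subgroup.subset_closure ⟨i, h i List.mem_cons_self, rfl⟩)
      (ih (fun j hj => h j (List.mem_cons_of_mem _ hj)))

lemma exists_word_of_mem_closure {K : Set B} {u : W}
    (h : u ∈ Subgroup.closure (cs.simple '' K)) :
    ∃ ω : List B, (∀ i ∈ ω, i ∈ K) ∧ π ω = u := by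
  induction h using Subgroup.closure_induction with
  | mem v hv =>
    obtain ⟨i, hi, rfl⟩ := hv
    exact ⟨[i], by simpa using hi, cs.wordProd_singleton i⟩
  | one => exact ⟨[], by simp, cs.wordProd_nil⟩
  | mul v w _ _ ihv ihw =>
    obtain ⟨ω₁, h1, rfl⟩ := ihv
    obtain ⟨ω₂, h2, rfl⟩ := ihw
    refine ⟨ω₁ ++ ω₂, ?_, cs.wordProd_append ω₁ ω₂⟩
    intro i hi
    rcases List.mem_append.mp hi with h | h
    · exact h1 i h
    · exact h2 i h
  | inv v _ ihv =>
    obtain ⟨ω, h1, rfl⟩ := ihv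
    exact ⟨ω.reverse, fun i hi => h1 i (List.mem_reverse.mp hi), cs.wordProd_reverse ω⟩

lemma key_additivity {K : Set B} {x : W}
    (hx : ∀ z ∈ Subgroup.closure (cs.simple '' K), ℓ x ≤ ℓ (x * z)) :
    ∀ ω : List B, (∀ i ∈ ω, i ∈ K) →
      (∃ β : List B, (∀ i ∈ β, i ∈ K) ∧ cs.IsReduced β ∧ π β = π ω) ∧
      ℓ (x * π ω) = ℓ x + ℓ (π ω) := by
  intro ω
  induction ω using List.reverseRecOn with
  | nil =>
    intro _
    exact ⟨⟨[], by simp, by simp [CoxeterSystem.IsReduced], rfl⟩, by simp⟩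
  | append_singleton ω' i ih =>
    intro hmem
    have hmem' : ∀ j ∈ ω', j ∈ K := fun j hj => hmem j (List.mem_append_left _ hj)
    have hiK : i ∈ K := hmem i (by simp)
    obtain ⟨⟨β', hβ'K, hβ'red, hβ'π⟩, hlen'⟩ := ih hmem'
    have hβ'len : (β' : List B).length = ℓ (π ω') := by
      have := hβ'red
      rw [CoxeterSystem.IsReduced, hβ'π] at this
      omega
    obtain ⟨α, hαlen, hαx⟩ := cs.exists_reduced_word x
    have hαlen : α.length = ℓ x := by rw [hαx]; exact (hαlen : ℓ (π α) = α.length).symm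
    have hu : π (ω' ++ [i]) = π ω' * s i := by
      rw [cs.wordProd_append, cs.wordProd_singleton]
    rcases cs.length_mul_simple (π ω') i with hup | hdown
    · -- ascent case : ℓ (π ω' * s i) = ℓ (π ω') + 1
      have hxup : ℓ (x * π ω' * s i) = ℓ (x * π ω') + 1 := by
        rcases cs.length_mul_simple (x * π ω') i with h2 | h2
        · exact h2
        · -- descent of x * π ω' at i : contradiction via the exchange property
          exfalso
          have hγπ : π (α ++ β') = x * π ω' := by
            rw [cs.wordProd_append, ← hαx, hβ'π]
          have hγred : cs.IsReduced (α ++ β') := by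
            show ℓ (π (α ++ β')) = _
            rw [hγπ, List.length_append, hlen']
            omega
          have hdesc : ℓ (π (α ++ β') * s i) < ℓ (π (α ++ β')) := by
            rw [hγπ]
            omega
          obtain ⟨j, hj, hex⟩ := exchange cs hγred i hdesc
          rw [hγπ] at hex
          by_cases hjα : j < α.length
          · have herase : (α ++ β').eraseIdx j = α.eraseIdx j ++ β' :=
              List.eraseIdx_append_of_lt_length hjα _
            rw [herase, cs.wordProd_append, hβ'π] at hex
            have hq : x * (π ω' * s i * (π ω')⁻¹) = π (α.eraseIdx j) := by
              rw [← mul_assoc, ← mul_assoc, hex, mul_inv_cancel_right]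
            have hz : π ω' * s i * (π ω')⁻¹ ∈ Subgroup.closure (cs.simple '' K) :=
              mul_mem (mul_mem (wordProd_mem_closure cs hmem')
                  (Subgroup.subset_closure ⟨i, hiK, rfl⟩))
                (inv_mem (wordProd_mem_closure cs hmem'))
            have h5 := hx _ hz
            rw [hq] at h5
            have h6 : ℓ (π (α.eraseIdx j)) ≤ (α.eraseIdx j).length :=
              cs.length_wordProd_le _
            have h7 : (α.eraseIdx j).length = α.length - 1 := by
              rw [List.length_eraseIdx]
              simp [hjα]
            omega
          · push_neg at hjα
            have herase : (α ++ β').eraseIdx j = α ++ β'.eraseIdx (j - α.length) :=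
              List.eraseIdx_append_of_length_le hjα _
            rw [herase, cs.wordProd_append, ← hαx] at hex
            have hq : π ω' * s i = π (β'.eraseIdx (j - α.length)) := by
              rw [mul_assoc] at hex
              exact mul_left_cancel hex
            have h6 : ℓ (π (β'.eraseIdx (j - α.length))) ≤ β'.length :=
              le_trans (cs.length_wordProd_le _) (List.Sublist.length_le
                (List.eraseIdx_sublist _ _))
            rw [← hq] at h6
            omega
      refine ⟨⟨β' ++ [i], ?_, ?_, ?_⟩, ?_⟩
      · intro j hj
        rcases List.mem_append.mp hj with h | h
        · exact hβ'K j h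
        · simp at h; subst h; exact hiK
      · show ℓ (π (β' ++ [i])) = _
        rw [cs.wordProd_append, cs.wordProd_singleton, hβ'π, List.length_append]
        simp only [List.length_singleton]
        omega
      · rw [cs.wordProd_append, cs.wordProd_singleton, hβ'π, hu]
      · rw [hu, ← mul_assoc, hxup, hlen']
        omega
    · -- descent case : ℓ (π ω' * s i) + 1 = ℓ (π ω')
      have hβdesc : ℓ (π β' * s i) < ℓ (π β') := by
        rw [hβ'π]
        omega
      obtain ⟨k, hk, hkex⟩ := exchange cs hβ'red i hβdesc
      rw [hβ'π] at hkex
      have hklen : (β'.eraseIdx k).length = β'.length - 1 := by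
        rw [List.length_eraseIdx]
        simp [hk]
      refine ⟨⟨β'.eraseIdx k, ?_, ?_, ?_⟩, ?_⟩
      · intro j hj
        exact hβ'K j (List.Sublist.mem hj (List.eraseIdx_sublist _ _))
      · show ℓ (π (β'.eraseIdx k)) = _
        rw [← hkex, hklen]
        omega
      · rw [← hkex, hu]
      · rw [hu]
        have hcanc : x * (π ω' * s i) * s i = x * π ω' := by
          rw [mul_assoc x, mul_assoc (π ω'), cs.simple_mul_simple_self, mul_one]
        have hge : ℓ (x * π ω') ≤ ℓ (x * (π ω' * s i)) + 1 := by
          rcases cs.length_mul_simple (x * (π ω' * s i)) i with h2 | h2 <;>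
            rw [hcanc] at h2 <;> omega
        have hle : ℓ (x * (π ω' * s i)) ≤ ℓ x + ℓ (π ω' * s i) := by
          have := cs.length_mul_le x (π ω' * s i)
          omega
        omega

lemma length_mul_right_add {K : Set B} {x : W}
    (hx : ∀ z ∈ Subgroup.closure (cs.simple '' K), ℓ x ≤ ℓ (x * z))
    {u : W} (hu : u ∈ Subgroup.closure (cs.simple '' K)) :
    ℓ (x * u) = ℓ x + ℓ u := by
  obtain ⟨ω, hωK, rfl⟩ := exists_word_of_mem_closure cs hu
  exact (key_additivity cs hx ω hωK).2

lemma length_mul_left_add {J : Set B} {x : W}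
    (hx : ∀ y ∈ Subgroup.closure (cs.simple '' J), ℓ x ≤ ℓ (y * x))
    {v : W} (hv : v ∈ Subgroup.closure (cs.simple '' J)) :
    ℓ (v * x) = ℓ v + ℓ x := by
  have hx' : ∀ z ∈ Subgroup.closure (cs.simple '' J), ℓ x⁻¹ ≤ ℓ (x⁻¹ * z) := by
    intro z hz
    rw [cs.length_inv, ← cs.length_inv (x⁻¹ * z), mul_inv_rev, inv_inv]
    exact hx z⁻¹ (inv_mem hz)
  have := length_mul_right_add cs hx' (inv_mem hv)
  rw [← cs.length_inv (v * x), mul_inv_rev, this, cs.length_inv, cs.length_inv]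
  omega

end ConjAux

/-- Let `(W,S)` be a Coxeter system, `J, K ⊆ S`, and let `x` be a
minimal-length `(W_J, W_K)`-double coset representative. Then conjugation by
`x` restricts to a length-preserving group isomorphism
`⟨K ∩ x⁻¹Jx⟩ ≃* ⟨J ∩ xKx⁻¹⟩`. -/
theorem conj_minimal_double_coset_rep_length_preserving_iso
    {B : Type*} {W : Type*} [Group W] {M : CoxeterMatrix B}
    (cs : CoxeterSystem M W) (J K : Set B) (x : W)
    (hmin : ∀ y ∈ Subgroup.closure (cs.simple '' J),
            ∀ z ∈ Subgroup.closure (cs.simple '' K),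
      cs.length x ≤ cs.length (y * x * z)) :
    ∃ φ : Subgroup.closure
            {w : W | w ∈ cs.simple '' K ∧ x * w * x⁻¹ ∈ cs.simple '' J} ≃*
          Subgroup.closure
            {w : W | w ∈ cs.simple '' J ∧ x⁻¹ * w * x ∈ cs.simple '' K},
      (∀ w : Subgroup.closure
            {w : W | w ∈ cs.simple '' K ∧ x * w * x⁻¹ ∈ cs.simple '' J},
        (φ w : W) = x * (w : W) * x⁻¹) ∧
      (∀ w ∈ Subgroup.closure
            {w : W | w ∈ cs.simple '' K ∧ x * w * x⁻¹ ∈ cs.simple '' J},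
        cs.length (x * w * x⁻¹) = cs.length w) := by
  classical
  set A : Set W := {w : W | w ∈ cs.simple '' K ∧ x * w * x⁻¹ ∈ cs.simple '' J} with hA
  set Bs : Set W := {w : W | w ∈ cs.simple '' J ∧ x⁻¹ * w * x ∈ cs.simple '' K} with hBs
  have himg : (⇑((MulAut.conj x : W ≃* W) : W →* W)) '' A = Bs := by
    ext v
    simp only [Set.mem_image, hA, hBs, Set.mem_setOf_eq]
    constructor
    · rintro ⟨w, ⟨hwK, hwJ⟩, rfl⟩
      have happ : ((MulAut.conj x : W ≃* W) : W →* W) w = x * w * x⁻¹ := rfl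
      rw [happ]
      refine ⟨hwJ, ?_⟩
      have : x⁻¹ * (x * w * x⁻¹) * x = w := by group
      rw [this]
      exact hwK
    · rintro ⟨hvJ, hvK⟩
      refine ⟨x⁻¹ * v * x, ⟨hvK, ?_⟩, ?_⟩
      · have : x * (x⁻¹ * v * x) * x⁻¹ = v := by group
        rw [this]
        exact hvJ
      · show x * (x⁻¹ * v * x) * x⁻¹ = v
        group
  have hmap : (Subgroup.closure A).map ((MulAut.conj x : W ≃* W) : W →* W)
      = Subgroup.closure Bs := by
    rw [MonoidHom.map_closure, himg]
  refine ⟨(MulEquiv.subgroupMap (MulAut.conj x : W ≃* W) (Subgroup.closure A)).trans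
    (MulEquiv.subgroupCongr hmap), fun w => rfl, ?_⟩
  intro w hw
  have hAK : A ⊆ cs.simple '' K := fun u hu => hu.1
  have hBJ : Bs ⊆ cs.simple '' J := fun u hu => hu.1
  have hwK : w ∈ Subgroup.closure (cs.simple '' K) := Subgroup.closure_mono hAK hw
  have hvJ : x * w * x⁻¹ ∈ Subgroup.closure (cs.simple '' J) := by
    apply Subgroup.closure_mono hBJ
    rw [← hmap]
    exact Subgroup.mem_map.mpr ⟨w, hw, rfl⟩
  have hR : ∀ z ∈ Subgroup.closure (cs.simple '' K),
      cs.length x ≤ cs.length (x * z) := by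
    intro z hz
    have := hmin 1 (one_mem _) z hz
    simpa using this
  have hL : ∀ y ∈ Subgroup.closure (cs.simple '' J),
      cs.length x ≤ cs.length (y * x) := by
    intro y hy
    have := hmin y hy 1 (one_mem _)
    simpa using this
  have h1 : cs.length ((x * w * x⁻¹) * x) = cs.length (x * w * x⁻¹) + cs.length x :=
    ConjAux.length_mul_left_add cs hL hvJ
  have h2 : cs.length (x * w) = cs.length x + cs.length w :=
    ConjAux.length_mul_right_add cs hR hwK
  have h3 : (x * w * x⁻¹) * x = x * w := by group
  rw [h3, h2] at h1
  omega
end
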